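/- arXiv:1204.4877 — 3 statements merged into one kernel-verified Lean document; each statement's English description precedes it below -/
import Mathlib

section
/- Let ν be a Lévy measure on ℝ such that ν((x,∞))/g(x) → c_+ as x ↓ 0, where c_+ > 0 and g : (0,∞) → (0,∞) is regularly varying at 0 with index −α for some α ∈ (0,2). Then for every p > α with ∫_{(0,1]} y^p ν(dy) < ∞, lim_{ε↓0} [ ∫_{(0,ε]} y^p ν(dy) ] / [ ε^p ν((ε,∞)) ] = α/(p − α). -/
open MeasureTheory Filter Set
open scoped ENNReal
open scoped Topology

lemma geom_slope (α p : ℝ) (hα0 : 0 < α) (hp : α < p) :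
    Tendsto (fun l : ℝ => (l ^ (-α) - 1) / (1 - l ^ (p - α))) (𝓝[<] (1:ℝ))
      (𝓝 (α / (p - α))) := by
  have hf : HasDerivAt (fun x : ℝ => x ^ (-α)) (-α) 1 := by
    have := Real.hasDerivAt_rpow_const (x := (1:ℝ)) (p := -α) (Or.inl one_ne_zero)
    simpa using this
  have hg : HasDerivAt (fun x : ℝ => x ^ (p - α)) (p - α) 1 := by
    have := Real.hasDerivAt_rpow_const (x := (1:ℝ)) (p := p - α) (Or.inl one_ne_zero)
    simpa using this
  have hsf : Tendsto (slope (fun x : ℝ => x ^ (-α)) 1) (𝓝[<] 1) (𝓝 (-α)) :=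
    (hasDerivAt_iff_tendsto_slope.1 hf).mono_left
      (nhdsWithin_mono _ (fun x hx => ne_of_lt hx))
  have hsg : Tendsto (slope (fun x : ℝ => x ^ (p - α)) 1) (𝓝[<] 1) (𝓝 (p - α)) :=
    (hasDerivAt_iff_tendsto_slope.1 hg).mono_left
      (nhdsWithin_mono _ (fun x hx => ne_of_lt hx))
  have hne : -(p - α) ≠ 0 := by linarith
  have h := hsf.div (hsg.neg) hne
  have heq : ∀ᶠ l in 𝓝[<] (1:ℝ),
      slope (fun x : ℝ => x ^ (-α)) 1 l / (-(slope (fun x : ℝ => x ^ (p - α)) 1 l))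
        = (l ^ (-α) - 1) / (1 - l ^ (p - α)) := by
    filter_upwards [self_mem_nhdsWithin] with l (hl : l < 1)
    have h1 : l - 1 ≠ 0 := by linarith
    rw [slope_def_field, slope_def_field]
    rw [Real.one_rpow, Real.one_rpow, ← neg_div, neg_sub]
    exact div_div_div_cancel_right₀ h1 _ _
  have h2 := (h.congr' heq)
  have : -α / -(p - α) = α / (p - α) := by rw [neg_div_neg_eq]
  rwa [this] at h2

lemma Ufin (ν : Measure ℝ) (hν2 : (∫⁻ y, ENNReal.ofReal (min 1 (y ^ 2)) ∂ν) < ⊤)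
    (x : ℝ) (hx : 0 < x) : ν (Set.Ioi x) ≠ ⊤ := by
  set m := min 1 (x ^ 2) with hm
  have hm0 : 0 < m := lt_min one_pos (by positivity)
  have key : ENNReal.ofReal m * ν (Set.Ioi x) ≤ ∫⁻ y, ENNReal.ofReal (min 1 (y ^ 2)) ∂ν := by
    rw [← setLIntegral_const (Set.Ioi x) (ENNReal.ofReal m)]
    refine le_trans (setLIntegral_mono' measurableSet_Ioi ?_) (setLIntegral_le_lintegral _ _)
    intro y hy
    refine ENNReal.ofReal_le_ofReal (min_le_min le_rfl ?_)
    have : x ≤ y := le_of_lt hy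
    nlinarith
  intro hT
  rw [hT, ENNReal.mul_top (by simp [ENNReal.ofReal_eq_zero, not_le, hm0])] at key
  exact absurd (le_trans (le_of_eq rfl) key) (by simpa using hν2.ne)

lemma tendsto_mul_self (c : ℝ) (hc : 0 < c) :
    Tendsto (fun ε : ℝ => c * ε) (𝓝[>] 0) (𝓝[>] 0) := by
  apply tendsto_nhdsWithin_of_tendsto_nhds_of_eventually_within
  · have hcont : Continuous (fun ε : ℝ => c * ε) := continuous_const.mul continuous_id
    have := hcont.tendsto (0:ℝ)
    simpa using this.mono_left nhdsWithin_le_nhds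
  · filter_upwards [self_mem_nhdsWithin] with x (hx : 0 < x)
    exact mul_pos hc hx

lemma Uratio (ν : Measure ℝ) (α cp : ℝ) (hcp : 0 < cp)
    (g : ℝ → ℝ) (hgpos : ∀ x, 0 < x → 0 < g x)
    (hgRV : ∀ c : ℝ, 0 < c → Tendsto (fun x => g (c * x) / g x) (𝓝[>] 0) (𝓝 (c ^ (-α))))
    (htail : Tendsto (fun x => (ν (Set.Ioi x)).toReal / g x) (𝓝[>] 0) (𝓝 cp))
    (c : ℝ) (hc : 0 < c) :
    Tendsto (fun ε => (ν (Set.Ioi (c * ε))).toReal / (ν (Set.Ioi ε)).toReal)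
      (𝓝[>] 0) (𝓝 (c ^ (-α))) := by
  have T1 : Tendsto (fun ε => (ν (Set.Ioi (c * ε))).toReal / g (c * ε)) (𝓝[>] 0) (𝓝 cp) :=
    htail.comp (tendsto_mul_self c hc)
  have T3 : Tendsto (fun ε => g ε / (ν (Set.Ioi ε)).toReal) (𝓝[>] 0) (𝓝 cp⁻¹) := by
    have := htail.inv₀ (ne_of_gt hcp)
    refine this.congr (fun ε => ?_)
    rw [inv_div]
  have h := (T1.mul (hgRV c hc)).mul T3
  have hlim : cp * c ^ (-α) * cp⁻¹ = c ^ (-α) := by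
    field_simp
  rw [hlim] at h
  refine h.congr' ?_
  filter_upwards [self_mem_nhdsWithin] with ε (hε : 0 < ε)
  have hg1 : g (c * ε) ≠ 0 := ne_of_gt (hgpos _ (mul_pos hc hε))
  have hg2 : g ε ≠ 0 := ne_of_gt (hgpos _ hε)
  field_simp

lemma pow_rpow_comm {x : ℝ} (hx : 0 ≤ x) (q : ℝ) (n : ℕ) :
    (x ^ n) ^ q = (x ^ q) ^ n := by
  rw [← Real.rpow_natCast x n, ← Real.rpow_mul hx, mul_comm, Real.rpow_mul hx,
    Real.rpow_natCast]

lemma ioc_decomp {l ε : ℝ} (hl0 : 0 < l) (hl1 : l < 1) (hε : 0 < ε) :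
    (⋃ n : ℕ, Set.Ioc (l ^ (n+1) * ε) (l ^ n * ε)) = Set.Ioc 0 ε := by
  ext y
  simp only [Set.mem_iUnion, Set.mem_Ioc]
  constructor
  · rintro ⟨n, h1, h2⟩
    refine ⟨lt_trans (by positivity) h1, le_trans h2 ?_⟩
    calc l ^ n * ε ≤ 1 * ε := by
          apply mul_le_mul_of_nonneg_right _ hε.le
          exact pow_le_one₀ hl0.le hl1.le
      _ = ε := one_mul ε
  · rintro ⟨hy0, hyε⟩
    have hex : ∃ k, l ^ k * ε < y := by
      have h := tendsto_pow_atTop_nhds_zero_of_lt_one hl0.le hl1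
      have h2 : Tendsto (fun k : ℕ => l ^ k * ε) atTop (𝓝 (0 * ε)) := h.mul_const ε
      rw [zero_mul] at h2
      exact ((h2.eventually (eventually_lt_nhds hy0)).exists)
    classical
    let k := Nat.find hex
    have hks : l ^ k * ε < y := Nat.find_spec hex
    have hk0 : k ≠ 0 := by
      intro h0
      have := hks
      rw [h0, pow_zero, one_mul] at this
      exact absurd hyε (not_le.2 this)
    obtain ⟨m, hm⟩ := Nat.exists_eq_succ_of_ne_zero hk0
    refine ⟨m, ?_, ?_⟩
    · have : l ^ (m+1) * ε < y := by rw [← Nat.succ_eq_add_one, ← hm]; exact hks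
      exact this
    · by_contra hcon
      push_neg at hcon
      have := Nat.find_min hex (m := m) (by omega)
      exact this hcon

lemma ioc_disj {l ε : ℝ} (hl0 : 0 < l) (hl1 : l < 1) (hε : 0 < ε) :
    Pairwise (Function.onFun Disjoint (fun n : ℕ => Set.Ioc (l ^ (n+1) * ε) (l ^ n * ε))) := by
  have key : ∀ m n : ℕ, m < n →
      Disjoint (Set.Ioc (l ^ (m+1) * ε) (l ^ m * ε)) (Set.Ioc (l ^ (n+1) * ε) (l ^ n * ε)) := by
    intro m n hmn
    apply Set.disjoint_left.2
    rintro y ⟨h1, _⟩ ⟨_, h4⟩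
    have : l ^ n * ε ≤ l ^ (m+1) * ε := by
      apply mul_le_mul_of_nonneg_right _ hε.le
      exact pow_le_pow_of_le_one hl0.le hl1.le (by omega)
    linarith
  intro m n hmn
  rcases lt_or_gt_of_ne hmn with h | h
  · exact key m n h
  · exact (key n m h).symm

lemma main_est (ν : Measure ℝ)
    (hν2 : (∫⁻ y, ENNReal.ofReal (min 1 (y ^ 2)) ∂ν) < ⊤)
    (α : ℝ) (hα0 : 0 < α)
    (cp : ℝ) (hcp : 0 < cp)
    (g : ℝ → ℝ) (hgpos : ∀ x, 0 < x → 0 < g x)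
    (hgRV : ∀ c : ℝ, 0 < c → Tendsto (fun x => g (c * x) / g x) (𝓝[>] 0) (𝓝 (c ^ (-α))))
    (htail : Tendsto (fun x => (ν (Set.Ioi x)).toReal / g x) (𝓝[>] 0) (𝓝 cp))
    (p : ℝ) (hp : α < p)
    (hmom : (∫⁻ y in Set.Ioc (0:ℝ) 1, ENNReal.ofReal (y ^ p) ∂ν) < ⊤)
    (l : ℝ) (hl0 : 0 < l) (hl1 : l < 1) (δ : ℝ) (hδ : 0 < δ) :
    ∀ᶠ ε in 𝓝[>] (0:ℝ),
      (∫⁻ y in Set.Ioc (0:ℝ) ε, ENNReal.ofReal (y ^ p) ∂ν).toReal /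
          (ε ^ p * (ν (Set.Ioi ε)).toReal) < (l ^ (-α) - 1) / (1 - l ^ (p - α)) + δ ∧
      l ^ p * ((l ^ (-α) - 1) / (1 - l ^ (p - α)) - δ) <
        (∫⁻ y in Set.Ioc (0:ℝ) ε, ENNReal.ofReal (y ^ p) ∂ν).toReal /
          (ε ^ p * (ν (Set.Ioi ε)).toReal) := by
  have hp0 : 0 < p := lt_trans hα0 hp
  set β := (α + p) / 2 with hβ
  have hαβ : α < β := by rw [hβ]; linarith
  have hβp : β < p := by rw [hβ]; linarith
  have hβ0 : 0 < β := lt_trans hα0 hαβ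
  set u : ℝ → ℝ := fun x => (ν (Set.Ioi x)).toReal with hu
  -- eventually u ε > 0
  have ev1 : ∀ᶠ ε in 𝓝[>] (0:ℝ), 0 < u ε := by
    have h0 : ∀ᶠ ε in 𝓝[>] (0:ℝ), 0 < u ε / g ε := htail.eventually (eventually_gt_nhds hcp)
    filter_upwards [h0, self_mem_nhdsWithin] with ε h1 h2
    have hg := hgpos ε h2
    rcases div_pos_iff.1 h1 with ⟨ha, _⟩ | ⟨_, hb⟩
    · exact ha
    · linarith
  have hlβ : l ^ (-α) < l ^ (-β) :=
    Real.rpow_lt_rpow_of_exponent_gt hl0 hl1 (by linarith)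
  have ev2 : ∀ᶠ ε in 𝓝[>] (0:ℝ), u (l * ε) / u ε < l ^ (-β) :=
    (Uratio ν α cp hcp g hgpos hgRV htail l hl0).eventually (eventually_lt_nhds hlβ)
  -- extract ε₀
  have hsmem : {ε : ℝ | 0 < u ε ∧ u (l * ε) ≤ l ^ (-β) * u ε} ∈ 𝓝[>] (0:ℝ) := by
    filter_upwards [ev1, ev2] with ε h1 h2
    exact ⟨h1, le_of_lt ((div_lt_iff₀ h1).1 h2)⟩
  obtain ⟨ε₁, hε₁, hsub⟩ := mem_nhdsGT_iff_exists_Ioc_subset.1 hsmem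
  set ε₀ := min ε₁ 1 with hε₀def
  have hε₀ : 0 < ε₀ := lt_min hε₁ one_pos
  have hε₀1 : ε₀ ≤ 1 := min_le_right _ _
  have hP : ∀ ε ∈ Set.Ioc (0:ℝ) ε₀, 0 < u ε ∧ u (l * ε) ≤ l ^ (-β) * u ε := by
    intro ε hε
    exact hsub ⟨hε.1, le_trans hε.2 (min_le_left _ _)⟩
  -- Potter bound
  have hPot : ∀ n : ℕ, ∀ ε ∈ Set.Ioc (0:ℝ) ε₀, u (l ^ n * ε) ≤ (l ^ n) ^ (-β) * u ε := by
    intro n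
    induction n with
    | zero => intro ε hε; simp
    | succ n ih =>
      intro ε hε
      have hmem : l ^ n * ε ∈ Set.Ioc (0:ℝ) ε₀ := by
        constructor
        · exact mul_pos (pow_pos hl0 n) hε.1
        · calc l ^ n * ε ≤ 1 * ε := by
                apply mul_le_mul_of_nonneg_right (pow_le_one₀ hl0.le hl1.le) hε.1.le
          _ = ε := one_mul ε
          _ ≤ ε₀ := hε.2
      have h1 : u (l ^ (n+1) * ε) ≤ l ^ (-β) * u (l ^ n * ε) := by
        have := (hP _ hmem).2
        rw [← mul_assoc, ← pow_succ'] at this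
        exact this
      calc u (l ^ (n+1) * ε) ≤ l ^ (-β) * u (l ^ n * ε) := h1
        _ ≤ l ^ (-β) * ((l ^ n) ^ (-β) * u ε) := by
            apply mul_le_mul_of_nonneg_left (ih ε hε) (Real.rpow_nonneg hl0.le _)
        _ = (l ^ (n+1)) ^ (-β) * u ε := by
            rw [← mul_assoc, ← Real.mul_rpow hl0.le (pow_nonneg hl0.le n), ← pow_succ']
  -- per-ε sandwich
  have key : ∀ ε ∈ Set.Ioc (0:ℝ) ε₀,
      (∫⁻ y in Set.Ioc (0:ℝ) ε, ENNReal.ofReal (y ^ p) ∂ν).toReal /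
          (ε ^ p * u ε) ≤ (∑' n : ℕ, (l ^ p) ^ n *
            ((ν (Set.Ioc (l ^ (n+1) * ε) (l ^ n * ε))).toReal / u ε)) ∧
        l ^ p * (∑' n : ℕ, (l ^ p) ^ n *
            ((ν (Set.Ioc (l ^ (n+1) * ε) (l ^ n * ε))).toReal / u ε)) ≤
          (∫⁻ y in Set.Ioc (0:ℝ) ε, ENNReal.ofReal (y ^ p) ∂ν).toReal /
          (ε ^ p * u ε) := by
    intro ε hε
    have hε0 : 0 < ε := hε.1
    have huε : 0 < u ε := (hP ε hε).1
    have hεp : 0 < ε ^ p := Real.rpow_pos_of_pos hε0 p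
    set J : ℕ → ℝ≥0∞ :=
      fun n => ∫⁻ y in Set.Ioc (l ^ (n+1) * ε) (l ^ n * ε), ENNReal.ofReal (y ^ p) ∂ν with hJdef
    set v : ℕ → ℝ := fun n => (ν (Set.Ioc (l ^ (n+1) * ε) (l ^ n * ε))).toReal with hvdef
    have hlep : ∀ n : ℕ, (0:ℝ) < l ^ (n+1) * ε := fun n => mul_pos (pow_pos hl0 _) hε0
    have hνAfin : ∀ n : ℕ, ν (Set.Ioc (l ^ (n+1) * ε) (l ^ n * ε)) ≠ ⊤ := fun n =>
      ne_top_of_le_ne_top (Ufin ν hν2 _ (hlep n)) (measure_mono Set.Ioc_subset_Ioi_self)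
    have hJsum : (∫⁻ y in Set.Ioc (0:ℝ) ε, ENNReal.ofReal (y ^ p) ∂ν) = ∑' n, J n := by
      rw [← ioc_decomp hl0 hl1 hε0, lintegral_iUnion (fun n => measurableSet_Ioc)
        (ioc_disj hl0 hl1 hε0)]
    have Jub : ∀ n : ℕ, J n ≤ ENNReal.ofReal ((l ^ n * ε) ^ p) *
        ν (Set.Ioc (l ^ (n+1) * ε) (l ^ n * ε)) := by
      intro n
      calc J n ≤ ∫⁻ _ in Set.Ioc (l ^ (n+1) * ε) (l ^ n * ε),
            ENNReal.ofReal ((l ^ n * ε) ^ p) ∂ν := by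
            apply setLIntegral_mono' measurableSet_Ioc
            intro y hy
            exact ENNReal.ofReal_le_ofReal
              (Real.rpow_le_rpow (le_of_lt (lt_trans (hlep n) hy.1)) hy.2 hp0.le)
        _ = _ := setLIntegral_const _ _
    have Jlb : ∀ n : ℕ, ENNReal.ofReal ((l ^ (n+1) * ε) ^ p) *
        ν (Set.Ioc (l ^ (n+1) * ε) (l ^ n * ε)) ≤ J n := by
      intro n
      calc ENNReal.ofReal ((l ^ (n+1) * ε) ^ p) * ν (Set.Ioc (l ^ (n+1) * ε) (l ^ n * ε))
          = ∫⁻ _ in Set.Ioc (l ^ (n+1) * ε) (l ^ n * ε),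
            ENNReal.ofReal ((l ^ (n+1) * ε) ^ p) ∂ν := (setLIntegral_const _ _).symm
        _ ≤ J n := by
            apply setLIntegral_mono' measurableSet_Ioc
            intro y hy
            exact ENNReal.ofReal_le_ofReal
              (Real.rpow_le_rpow (hlep n).le hy.1.le hp0.le)
    have Jfin : ∀ n : ℕ, J n ≠ ⊤ := fun n =>
      ne_top_of_le_ne_top (ENNReal.mul_ne_top ENNReal.ofReal_ne_top (hνAfin n)) (Jub n)
    have hNj : (∫⁻ y in Set.Ioc (0:ℝ) ε, ENNReal.ofReal (y ^ p) ∂ν).toReal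
        = ∑' n, (J n).toReal := by
      rw [hJsum, ENNReal.tsum_toReal_eq Jfin]
    have hpow_split : ∀ n : ℕ, (l ^ n * ε) ^ p = (l ^ p) ^ n * ε ^ p := by
      intro n
      rw [Real.mul_rpow (pow_nonneg hl0.le n) hε0.le, pow_rpow_comm hl0.le]
    have jub : ∀ n : ℕ, (J n).toReal ≤ ε ^ p * ((l ^ p) ^ n * v n) := by
      intro n
      have := ENNReal.toReal_mono (ENNReal.mul_ne_top ENNReal.ofReal_ne_top (hνAfin n)) (Jub n)
      rw [ENNReal.toReal_mul, ENNReal.toReal_ofReal (Real.rpow_nonneg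
        (mul_pos (pow_pos hl0 n) hε0).le p), hpow_split n] at this
      calc (J n).toReal ≤ (l ^ p) ^ n * ε ^ p * v n := this
        _ = ε ^ p * ((l ^ p) ^ n * v n) := by ring
    have jlb : ∀ n : ℕ, l ^ p * (ε ^ p * ((l ^ p) ^ n * v n)) ≤ (J n).toReal := by
      intro n
      have h1 := ENNReal.toReal_mono (Jfin n) (Jlb n)
      rw [ENNReal.toReal_mul, ENNReal.toReal_ofReal (Real.rpow_nonneg (hlep n).le p)] at h1
      have h2 : (l ^ (n+1) * ε) ^ p = l ^ p * ((l ^ p) ^ n * ε ^ p) := by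
        rw [pow_succ', mul_assoc, Real.mul_rpow hl0.le (mul_pos (pow_pos hl0 n) hε0).le,
          hpow_split n]
      calc l ^ p * (ε ^ p * ((l ^ p) ^ n * v n)) = (l ^ (n+1) * ε) ^ p * v n := by
            rw [h2]; ring
        _ ≤ (J n).toReal := h1
    -- summability
    have hv_nonneg : ∀ n : ℕ, 0 ≤ v n := fun n => ENNReal.toReal_nonneg
    have hvle : ∀ n : ℕ, v n ≤ (l ^ (n+1)) ^ (-β) * u ε := by
      intro n
      calc v n ≤ u (l ^ (n+1) * ε) := by
            apply ENNReal.toReal_mono (Ufin ν hν2 _ (hlep n))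
            exact measure_mono Set.Ioc_subset_Ioi_self
        _ ≤ (l ^ (n+1)) ^ (-β) * u ε := hPot (n+1) ε hε
    set r : ℝ := l ^ (p - β) with hrdef
    have hr0 : 0 ≤ r := (Real.rpow_pos_of_pos hl0 _).le
    have hr1 : r < 1 := Real.rpow_lt_one hl0.le hl1 (by linarith)
    have hfle : ∀ n : ℕ, (l ^ p) ^ n * v n ≤ (l ^ (-β) * u ε) * r ^ n := by
      intro n
      calc (l ^ p) ^ n * v n ≤ (l ^ p) ^ n * ((l ^ (n+1)) ^ (-β) * u ε) := by
            apply mul_le_mul_of_nonneg_left (hvle n)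
            positivity
        _ = (l ^ (-β) * u ε) * r ^ n := by
            rw [pow_rpow_comm hl0.le, pow_succ', hrdef,
              show p - β = p + -β from sub_eq_add_neg p β, Real.rpow_add hl0, mul_pow]
            ring
    have hsumgeo : Summable (fun n : ℕ => (l ^ (-β) * u ε) * r ^ n) :=
      (summable_geometric_of_lt_one hr0 hr1).mul_left _
    have hf_nonneg : ∀ n : ℕ, 0 ≤ (l ^ p) ^ n * v n := by
      intro n
      have := hv_nonneg n
      positivity
    have hsumf : Summable (fun n : ℕ => (l ^ p) ^ n * v n) :=
      Summable.of_nonneg_of_le hf_nonneg hfle hsumgeo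
    have hsumj : Summable (fun n : ℕ => (J n).toReal) :=
      Summable.of_nonneg_of_le (fun n => ENNReal.toReal_nonneg) jub (hsumf.mul_left _)
    -- tsum comparisons
    have hNub : (∫⁻ y in Set.Ioc (0:ℝ) ε, ENNReal.ofReal (y ^ p) ∂ν).toReal
        ≤ ε ^ p * ∑' n, (l ^ p) ^ n * v n := by
      rw [hNj, ← tsum_mul_left]
      exact Summable.tsum_le_tsum jub hsumj (hsumf.mul_left _)
    have hNlb : l ^ p * (ε ^ p * ∑' n, (l ^ p) ^ n * v n)
        ≤ (∫⁻ y in Set.Ioc (0:ℝ) ε, ENNReal.ofReal (y ^ p) ∂ν).toReal := by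
      rw [hNj, ← tsum_mul_left, ← tsum_mul_left]
      exact Summable.tsum_le_tsum jlb ((hsumf.mul_left _).mul_left _) hsumj
    have hvw : ∑' n, (l ^ p) ^ n * v n = u ε * ∑' n, (l ^ p) ^ n * (v n / u ε) := by
      rw [← tsum_mul_left]
      congr 1
      funext n
      rw [mul_comm (u ε), mul_assoc, div_mul_cancel₀ _ (ne_of_gt huε)]
    constructor
    · rw [div_le_iff₀ (mul_pos hεp huε)]
      calc (∫⁻ y in Set.Ioc (0:ℝ) ε, ENNReal.ofReal (y ^ p) ∂ν).toReal
          ≤ ε ^ p * ∑' n, (l ^ p) ^ n * v n := hNub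
        _ = (∑' n, (l ^ p) ^ n * (v n / u ε)) * (ε ^ p * u ε) := by rw [hvw]; ring
    · rw [le_div_iff₀ (mul_pos hεp huε)]
      calc l ^ p * (∑' n, (l ^ p) ^ n * (v n / u ε)) * (ε ^ p * u ε)
          = l ^ p * (ε ^ p * ∑' n, (l ^ p) ^ n * v n) := by rw [hvw]; ring
        _ ≤ _ := hNlb
  -- convergence of the series
  have hT : Tendsto (fun ε => ∑' n : ℕ, (l ^ p) ^ n *
      ((ν (Set.Ioc (l ^ (n+1) * ε) (l ^ n * ε))).toReal / u ε)) (𝓝[>] (0:ℝ))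
      (𝓝 ((l ^ (-α) - 1) / (1 - l ^ (p - α)))) := by
    have hioc : ∀ a b : ℝ, 0 < a → a < b → (ν (Set.Ioc a b)).toReal = u a - u b := by
      intro a b ha hab
      have hsplit : Set.Ioi a = Set.Ioc a b ∪ Set.Ioi b := (Set.Ioc_union_Ioi_eq_Ioi hab.le).symm
      have hdis : Disjoint (Set.Ioc a b) (Set.Ioi b) :=
        Set.disjoint_left.2 (fun y hy hy2 => absurd hy.2 (not_le.2 hy2))
      have hm : ν (Set.Ioi a) = ν (Set.Ioc a b) + ν (Set.Ioi b) := by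
        rw [hsplit, measure_union hdis measurableSet_Ioi]
      have h1 : u a = (ν (Set.Ioc a b)).toReal + u b := by
        rw [hu]
        simp only []
        rw [hm, ENNReal.toReal_add
          (ne_top_of_le_ne_top (Ufin ν hν2 a ha) (measure_mono Set.Ioc_subset_Ioi_self))
          (Ufin ν hν2 b (lt_trans ha hab))]
      linarith
    set r : ℝ := l ^ (p - β) with hrdef
    have hr0 : 0 ≤ r := (Real.rpow_pos_of_pos hl0 _).le
    have hr1 : r < 1 := Real.rpow_lt_one hl0.le hl1 (by linarith)
    have hsumbd : Summable (fun k : ℕ => l ^ (-β) * r ^ k) :=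
      (summable_geometric_of_lt_one hr0 hr1).mul_left _
    have hab : ∀ k : ℕ, Tendsto (fun ε => (l ^ p) ^ k *
        ((ν (Set.Ioc (l ^ (k+1) * ε) (l ^ k * ε))).toReal / u ε)) (𝓝[>] (0:ℝ))
        (𝓝 ((l ^ p) ^ k * ((l ^ (k+1)) ^ (-α) - (l ^ k) ^ (-α)))) := by
      intro k
      have h1 := Uratio ν α cp hcp g hgpos hgRV htail (l ^ (k+1)) (pow_pos hl0 _)
      have h2 := Uratio ν α cp hcp g hgpos hgRV htail (l ^ k) (pow_pos hl0 _)
      have h3 := (h1.sub h2).const_mul ((l ^ p) ^ k)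
      refine h3.congr' ?_
      filter_upwards [self_mem_nhdsWithin] with ε (hε : 0 < ε)
      congr 1
      have hlt : l ^ (k+1) * ε < l ^ k * ε := by
        apply mul_lt_mul_of_pos_right _ hε
        exact pow_lt_pow_right_of_lt_one₀ hl0 hl1 (by omega)
      rw [hioc _ _ (mul_pos (pow_pos hl0 _) hε) hlt, sub_div]
    have h_bound : ∀ᶠ ε in 𝓝[>] (0:ℝ), ∀ k : ℕ,
        ‖(l ^ p) ^ k * ((ν (Set.Ioc (l ^ (k+1) * ε) (l ^ k * ε))).toReal / u ε)‖
          ≤ l ^ (-β) * r ^ k := by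
      have hIoc : Set.Ioc (0:ℝ) ε₀ ∈ 𝓝[>] (0:ℝ) := Ioc_mem_nhdsGT_of_mem ⟨le_refl _, hε₀⟩
      filter_upwards [hIoc] with ε hε k
      have hε0 : 0 < ε := hε.1
      have huε : 0 < u ε := (hP ε hε).1
      have hvnn : 0 ≤ (ν (Set.Ioc (l ^ (k+1) * ε) (l ^ k * ε))).toReal := ENNReal.toReal_nonneg
      have hwnn : 0 ≤ (l ^ p) ^ k *
          ((ν (Set.Ioc (l ^ (k+1) * ε) (l ^ k * ε))).toReal / u ε) := by positivity
      rw [Real.norm_eq_abs, abs_of_nonneg hwnn]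
      have hvle : (ν (Set.Ioc (l ^ (k+1) * ε) (l ^ k * ε))).toReal ≤ (l ^ (k+1)) ^ (-β) * u ε := by
        calc (ν (Set.Ioc (l ^ (k+1) * ε) (l ^ k * ε))).toReal ≤ u (l ^ (k+1) * ε) := by
              apply ENNReal.toReal_mono (Ufin ν hν2 _ (mul_pos (pow_pos hl0 _) hε0))
              exact measure_mono Set.Ioc_subset_Ioi_self
          _ ≤ (l ^ (k+1)) ^ (-β) * u ε := hPot (k+1) ε hε
      calc (l ^ p) ^ k * ((ν (Set.Ioc (l ^ (k+1) * ε) (l ^ k * ε))).toReal / u ε)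
          ≤ (l ^ p) ^ k * ((l ^ (k+1)) ^ (-β)) := by
            apply mul_le_mul_of_nonneg_left _ (by positivity)
            rw [div_le_iff₀ huε]
            exact hvle
        _ = l ^ (-β) * r ^ k := by
            rw [pow_rpow_comm hl0.le, pow_succ', hrdef,
              show p - β = p + -β from sub_eq_add_neg p β, Real.rpow_add hl0, mul_pow]
            ring
    have hmain := tendsto_tsum_of_dominated_convergence hsumbd hab h_bound
    have hterm : ∀ k : ℕ, (l ^ p) ^ k * ((l ^ (k+1)) ^ (-α) - (l ^ k) ^ (-α))
        = (l ^ (-α) - 1) * (l ^ (p - α)) ^ k := by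
      intro k
      rw [pow_rpow_comm hl0.le (-α) (k+1), pow_rpow_comm hl0.le (-α) k, pow_succ',
        show p - α = p + -α from sub_eq_add_neg p α, Real.rpow_add hl0, mul_pow]
      ring
    have hsum_eq : (∑' k : ℕ, (l ^ p) ^ k * ((l ^ (k+1)) ^ (-α) - (l ^ k) ^ (-α)))
        = (l ^ (-α) - 1) / (1 - l ^ (p - α)) := by
      have hs0 : (0:ℝ) ≤ l ^ (p - α) := (Real.rpow_pos_of_pos hl0 _).le
      have hs1 : l ^ (p - α) < 1 := Real.rpow_lt_one hl0.le hl1 (by linarith)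
      calc (∑' k : ℕ, (l ^ p) ^ k * ((l ^ (k+1)) ^ (-α) - (l ^ k) ^ (-α)))
          = ∑' k : ℕ, (l ^ (-α) - 1) * (l ^ (p - α)) ^ k := by
            congr 1; funext k; exact hterm k
        _ = (l ^ (-α) - 1) * (1 - l ^ (p - α))⁻¹ := by
            rw [tsum_mul_left, tsum_geometric_of_lt_one hs0 hs1]
        _ = (l ^ (-α) - 1) / (1 - l ^ (p - α)) := (div_eq_mul_inv _ _).symm
    rw [← hsum_eq]
    exact hmain
  -- combine
  have hIoc : Set.Ioc (0:ℝ) ε₀ ∈ 𝓝[>] (0:ℝ) := Ioc_mem_nhdsGT_of_mem ⟨le_refl _, hε₀⟩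
  have hlp0 : (0:ℝ) < l ^ p := Real.rpow_pos_of_pos hl0 p
  filter_upwards [hIoc, hT.eventually (eventually_lt_nhds (lt_add_of_pos_right _ hδ)),
    hT.eventually (eventually_gt_nhds (sub_lt_self _ hδ))] with ε hε hTub hTlb
  obtain ⟨hub, hlb⟩ := key ε hε
  constructor
  · exact lt_of_le_of_lt hub hTub
  · calc l ^ p * ((l ^ (-α) - 1) / (1 - l ^ (p - α)) - δ)
        < l ^ p * (∑' n : ℕ, (l ^ p) ^ n *
            ((ν (Set.Ioc (l ^ (n+1) * ε) (l ^ n * ε))).toReal / u ε)) := by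
          exact mul_lt_mul_of_pos_left hTlb hlp0
      _ ≤ _ := hlb


/-- Karamata-type consequence: if `ν((x,∞)) ∼ c₊ g(x)` as `x ↓ 0` with `g` regularly varying
at `0` of index `-α`, then for every `p > α` with `∫_{(0,1]} y^p ν(dy) < ∞`,
`∫_{(0,ε]} y^p ν(dy) / (ε^p ν((ε,∞))) → α/(p-α)` as `ε ↓ 0`. -/
theorem stmt_13 (ν : Measure ℝ)
    (hν0 : ν {0} = 0)
    (hν2 : (∫⁻ y, ENNReal.ofReal (min 1 (y ^ 2)) ∂ν) < ⊤)
    (α : ℝ) (hα0 : 0 < α) (hα2 : α < 2)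
    (cp : ℝ) (hcp : 0 < cp)
    (g : ℝ → ℝ) (hgpos : ∀ x, 0 < x → 0 < g x)
    (hgRV : ∀ c : ℝ, 0 < c → Filter.Tendsto (fun x => g (c * x) / g x)
      (nhdsWithin 0 (Set.Ioi 0)) (nhds (c ^ (-α))))
    (htail : Filter.Tendsto (fun x => (ν (Set.Ioi x)).toReal / g x)
      (nhdsWithin 0 (Set.Ioi 0)) (nhds cp))
    (p : ℝ) (hp : α < p)
    (hmom : (∫⁻ y in Set.Ioc (0:ℝ) 1, ENNReal.ofReal (y ^ p) ∂ν) < ⊤) :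
    Filter.Tendsto
      (fun ε => (∫⁻ y in Set.Ioc (0:ℝ) ε, ENNReal.ofReal (y ^ p) ∂ν).toReal /
        (ε ^ p * (ν (Set.Ioi ε)).toReal))
      (nhdsWithin 0 (Set.Ioi 0)) (nhds (α / (p - α))) := by
  have hp0 : 0 < p := lt_trans hα0 hp
  set A := α / (p - α) with hA
  rw [Metric.tendsto_nhds]
  intro η hη
  have hη4 : 0 < η / 4 := by linarith
  -- choose l close to 1
  have hL := geom_slope α p hα0 hp
  have hlpow : Tendsto (fun l : ℝ => l ^ p) (𝓝[<] (1:ℝ)) (𝓝 1) := by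
    have hc : ContinuousAt (fun l : ℝ => l ^ p) 1 :=
      Real.continuousAt_rpow_const 1 p (Or.inl one_ne_zero)
    have h2 : Tendsto (fun l : ℝ => l ^ p) (𝓝[<] (1:ℝ)) (𝓝 ((1:ℝ) ^ p)) :=
      hc.tendsto.mono_left (nhdsWithin_le_nhds (s := Set.Iio 1))
    simpa using h2
  have hL2 : Tendsto (fun l : ℝ => l ^ p * ((l ^ (-α) - 1) / (1 - l ^ (p - α))))
      (𝓝[<] (1:ℝ)) (𝓝 A) := by
    have := hlpow.mul hL
    simpa using this
  have hIoo : Set.Ioo (0:ℝ) 1 ∈ 𝓝[<] (1:ℝ) :=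
    Ioo_mem_nhdsLT_of_mem ⟨one_pos, le_refl _⟩
  have hev := ((Metric.tendsto_nhds.1 hL (η/4) hη4).and
    ((Metric.tendsto_nhds.1 hL2 (η/4) hη4).and (eventually_of_mem hIoo (fun _ h => h))))
  obtain ⟨l, hdL, hdL2, hl0, hl1⟩ := hev.exists
  set L := (l ^ (-α) - 1) / (1 - l ^ (p - α)) with hLdef
  have hLlt : L < A + η/4 := by
    have := (abs_lt.1 (by rw [← Real.dist_eq]; exact hdL)).2
    linarith
  have hLgt : A - η/4 < l ^ p * L := by
    have := (abs_lt.1 (by rw [← Real.dist_eq]; exact hdL2)).1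
    linarith
  have hlp1 : l ^ p ≤ 1 := Real.rpow_le_one hl0.le hl1.le hp0.le
  have hlpnn : 0 ≤ l ^ p := (Real.rpow_pos_of_pos hl0 p).le
  filter_upwards [main_est ν hν2 α hα0 cp hcp g hgpos hgRV htail p hp hmom l hl0 hl1
    (η/4) hη4] with ε hε
  obtain ⟨hub, hlb⟩ := hε
  rw [Real.dist_eq, abs_lt]
  constructor
  · -- A - φ < η i.e. -η < φ - A
    have h1 : l ^ p * (L - η/4) ≥ l ^ p * L - η/4 := by nlinarith
    have : A - η/2 < l ^ p * (L - η/4) := by linarith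
    linarith
  · have : (∫⁻ y in Set.Ioc (0:ℝ) ε, ENNReal.ofReal (y ^ p) ∂ν).toReal /
        (ε ^ p * (ν (Set.Ioi ε)).toReal) < A + η/2 := by linarith
    linarith
end

section
/- Let m_2, m_3, m_4 be real numbers such that m_k = ∫ y^k ν(dy) for k = 2, 3, 4 for some finite positive measure ν on ℝ, and assume m_4 > 0. Then min { ν̄(ℝ) : ν̄ a finite positive measure on ℝ with ∫ y² ν̄(dy) = m_2, ∫ y³ ν̄(dy) = m_3, ∫ y⁴ ν̄(dy) = m_4 } = m_2² / m_4, and the minimum is attained. -/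
open MeasureTheory Filter Set
open scoped ENNReal

lemma cs_int (μ : Measure ℝ) (f g : ℝ → ℝ)
    (hf : Integrable (fun x => f x ^ 2) μ) (hg : Integrable (fun x => g x ^ 2) μ)
    (hfg : Integrable (fun x => f x * g x) μ) :
    (∫ x, f x * g x ∂μ) ^ 2 ≤ (∫ x, f x ^ 2 ∂μ) * (∫ x, g x ^ 2 ∂μ) := by
  have key : ∀ t : ℝ, 0 ≤ (∫ x, g x ^ 2 ∂μ) * (t * t) + (2 * ∫ x, f x * g x ∂μ) * t
      + ∫ x, f x ^ 2 ∂μ := by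
    intro t
    have h0 : 0 ≤ ∫ x, (t * g x + f x) ^ 2 ∂μ := integral_nonneg fun x => sq_nonneg _
    have heq : ∫ x, (t * g x + f x) ^ 2 ∂μ
        = (∫ x, g x ^ 2 ∂μ) * (t * t) + (2 * ∫ x, f x * g x ∂μ) * t + ∫ x, f x ^ 2 ∂μ := by
      have h1 : (fun x => (t * g x + f x) ^ 2)
          = fun x => t ^ 2 * g x ^ 2 + (2 * t) * (f x * g x) + f x ^ 2 := by
        funext x; ring
      rw [h1]
      rw [integral_add ?_ hf, integral_add (hg.const_mul (t^2)) (hfg.const_mul (2*t)),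
        integral_const_mul, integral_const_mul]
      · ring
      · exact (hg.const_mul (t^2)).add (hfg.const_mul (2*t))
    linarith [heq ▸ h0]
  have hd := discrim_le_zero key
  rw [discrim] at hd
  nlinarith

lemma integrable_dirac' (f : ℝ → ℝ) (a : ℝ) : Integrable f (Measure.dirac a) :=
  (integrable_const (f a)).congr (ae_eq_dirac f).symm

/-- Minimal intensity for the truncated moment problem with prescribed moments of orders
`2, 3, 4`: if `m_k = ∫ y^k ν(dy)`, `k = 2,3,4`, for some finite positive measure `ν` and
`m₄ > 0`, then the minimum of `ν̄(ℝ)` over finite positive measures `ν̄` matching these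
moments equals `m₂²/m₄`, and it is attained. -/
theorem stmt_16 (ν : Measure ℝ) (hν : IsFiniteMeasure ν)
    (hint : ∀ k, 2 ≤ k → k ≤ 4 → MeasureTheory.Integrable (fun y : ℝ => y ^ k) ν)
    (m₂ m₃ m₄ : ℝ) (h₂ : m₂ = ∫ y, y ^ 2 ∂ν) (h₃ : m₃ = ∫ y, y ^ 3 ∂ν)
    (h₄ : m₄ = ∫ y, y ^ 4 ∂ν) (hm₄ : 0 < m₄) :
    IsLeast
      {mass : ℝ | ∃ νb : Measure ℝ, IsFiniteMeasure νb ∧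
        νb Set.univ = ENNReal.ofReal mass ∧
        (∀ k, 2 ≤ k → k ≤ 4 → MeasureTheory.Integrable (fun y : ℝ => y ^ k) νb) ∧
        (∫ y, y ^ 2 ∂νb) = m₂ ∧ (∫ y, y ^ 3 ∂νb) = m₃ ∧ (∫ y, y ^ 4 ∂νb) = m₄}
      (m₂ ^ 2 / m₄) := by
  -- m₂ > 0
  have hi2 := hint 2 le_rfl (by norm_num)
  have hi3 := hint 3 (by norm_num) (by norm_num)
  have hi4 := hint 4 (by norm_num) le_rfl
  have hm2nn : 0 ≤ m₂ := h₂ ▸ integral_nonneg fun y => sq_nonneg y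
  have hm2 : 0 < m₂ := by
    rcases hm2nn.lt_or_eq with h | h
    · exact h
    · exfalso
      have hz : (fun y : ℝ => y ^ 2) =ᵐ[ν] 0 :=
        (integral_eq_zero_iff_of_nonneg (fun y => sq_nonneg y) hi2).mp (h₂ ▸ h.symm)
      have hz4 : (fun y : ℝ => y ^ 4) =ᵐ[ν] 0 := by
        filter_upwards [hz] with y hy
        have : y ^ 2 = 0 := hy
        simp only [Pi.zero_apply]
        nlinarith
      have : m₄ = 0 := by rw [h₄, integral_congr_ae hz4]; simp
      linarith
  -- Cauchy-Schwarz on ν : m₃ ^ 2 ≤ m₂ * m₄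
  have hgg : Integrable (fun x : ℝ => (x ^ 2) ^ 2) ν := by
    have h : (fun x : ℝ => (x ^ 2) ^ 2) = fun x : ℝ => x ^ 4 := by funext x; ring
    rw [h]; exact hi4
  have hfg : Integrable (fun x : ℝ => x * x ^ 2) ν := by
    have h : (fun x : ℝ => x * x ^ 2) = fun x : ℝ => x ^ 3 := by funext x; ring
    rw [h]; exact hi3
  have hcs := cs_int ν (fun y => y) (fun y => y ^ 2) hi2 hgg hfg
  have e3 : (∫ x, x * x ^ 2 ∂ν) = m₃ := by
    rw [h₃]; exact integral_congr_ae (Eventually.of_forall fun x => by ring)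
  have e4 : (∫ x, (x ^ 2) ^ 2 ∂ν) = m₄ := by
    rw [h₄]; exact integral_congr_ae (Eventually.of_forall fun x => by ring)
  rw [e3, e4, ← h₂] at hcs
  -- the optimal measure
  set c : ℝ := m₂ ^ 2 / m₄ with hc
  set a : ℝ := Real.sqrt (m₄ / m₂) with ha
  have ha2 : a ^ 2 = m₄ / m₂ := Real.sq_sqrt (by positivity)
  have hapos : 0 < a := Real.sqrt_pos.mpr (by positivity)
  set d : ℝ := m₃ / a ^ 3 with hdd
  have hd3 : d * a ^ 3 = m₃ := by rw [hdd]; field_simp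
  have hca3 : c * a ^ 3 = m₂ * a := by
    have : c * a ^ 3 = c * (a ^ 2) * a := by ring
    rw [this, ha2]; field_simp [hc]; rw [hc]; field_simp
  have hma : m₃ ^ 2 ≤ (m₂ * a) ^ 2 := by
    have : (m₂ * a) ^ 2 = m₂ ^ 2 * a ^ 2 := by ring
    rw [this, ha2]
    calc m₃ ^ 2 ≤ m₂ * m₄ := hcs
      _ = m₂ ^ 2 * (m₄ / m₂) := by field_simp
  have habs : -(m₂ * a) ≤ m₃ ∧ m₃ ≤ m₂ * a :=
    abs_le_of_sq_le_sq' hma (by positivity)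
  have hdc : |d| ≤ c := by
    have ha3 : (0:ℝ) < a ^ 3 := by positivity
    rw [abs_le]
    constructor
    · rw [hdd, le_div_iff₀ ha3]
      nlinarith [habs.1, hca3]
    · rw [hdd, div_le_iff₀ ha3]
      nlinarith [habs.2, hca3]
  set α : ℝ := (c + d) / 2 with hα
  set β : ℝ := (c - d) / 2 with hβ
  have hαnn : 0 ≤ α := by rw [hα]; rw [abs_le] at hdc; linarith [hdc.1]
  have hβnn : 0 ≤ β := by rw [hβ]; rw [abs_le] at hdc; linarith [hdc.2]
  set νb : Measure ℝ :=
    ENNReal.ofReal α • Measure.dirac a + ENNReal.ofReal β • Measure.dirac (-a) with hνb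
  have hint1 : ∀ f : ℝ → ℝ, Integrable f νb := by
    intro f
    exact ((integrable_dirac' f a).smul_measure ENNReal.ofReal_ne_top).add_measure
      ((integrable_dirac' f (-a)).smul_measure ENNReal.ofReal_ne_top)
  have hik : ∀ k : ℕ, (∫ y, y ^ k ∂νb) = α * a ^ k + β * (-a) ^ k := by
    intro k
    rw [hνb, integral_add_measure
        ((integrable_dirac' _ a).smul_measure ENNReal.ofReal_ne_top)
        ((integrable_dirac' _ (-a)).smul_measure ENNReal.ofReal_ne_top),
      integral_smul_measure, integral_smul_measure, integral_dirac, integral_dirac,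
      ENNReal.toReal_ofReal hαnn, ENNReal.toReal_ofReal hβnn, smul_eq_mul, smul_eq_mul]
  constructor
  · refine ⟨νb, ?_, ?_, fun k _ _ => hint1 _, ?_, ?_, ?_⟩
    · constructor
      rw [hνb]
      simp only [Measure.add_apply, Measure.smul_apply, smul_eq_mul,
        Measure.dirac_apply_of_mem (mem_univ _), mul_one]
      exact ENNReal.add_lt_top.mpr ⟨ENNReal.ofReal_lt_top, ENNReal.ofReal_lt_top⟩
    · rw [hνb]
      simp only [Measure.add_apply, Measure.smul_apply, smul_eq_mul,
        Measure.dirac_apply_of_mem (mem_univ _), mul_one]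
      rw [← ENNReal.ofReal_add hαnn hβnn]
      congr 1
      rw [hα, hβ]; ring
    · rw [hik 2]
      have : α * a ^ 2 + β * (-a) ^ 2 = c * a ^ 2 := by rw [hα, hβ]; ring
      rw [this, ha2, hc]; field_simp
    · rw [hik 3]
      have : α * a ^ 3 + β * (-a) ^ 3 = d * a ^ 3 := by rw [hα, hβ]; ring
      rw [this, hd3]
    · rw [hik 4]
      have h1 : α * a ^ 4 + β * (-a) ^ 4 = c * (a ^ 2) ^ 2 := by rw [hα, hβ]; ring
      rw [h1, ha2, hc]; field_simp
  · rintro mass ⟨μb, hfinb, hub, hib, hb2, hb3, hb4⟩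
    have hμb0 : μb ≠ 0 := by
      intro h
      rw [h] at hb4
      simp at hb4
      linarith
    have hmass : 0 < mass := by
      by_contra h
      push_neg at h
      have : ENNReal.ofReal mass = 0 := ENNReal.ofReal_eq_zero.mpr h
      rw [this] at hub
      exact hμb0 (Measure.measure_univ_eq_zero.mp hub)
    have h1int : (∫ _x : ℝ, (1:ℝ) ∂μb) = mass := by
      rw [integral_const, smul_eq_mul, mul_one, Measure.real, hub, ENNReal.toReal_ofReal hmass.le]
    have hggb : Integrable (fun x : ℝ => (x ^ 2) ^ 2) μb := by
      have h : (fun x : ℝ => (x ^ 2) ^ 2) = fun x : ℝ => x ^ 4 := by funext x; ring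
      rw [h]; exact hib 4 (by norm_num) le_rfl
    have hfgb : Integrable (fun x : ℝ => (1:ℝ) * x ^ 2) μb := by
      have h : (fun x : ℝ => (1:ℝ) * x ^ 2) = fun x : ℝ => x ^ 2 := by funext x; ring
      rw [h]; exact hib 2 le_rfl (by norm_num)
    have hffb : Integrable (fun _x : ℝ => (1:ℝ) ^ 2) μb := by
      simpa using (integrable_const (1:ℝ) : Integrable (fun _ : ℝ => (1:ℝ)) μb)
    have hcsb := cs_int μb (fun _ => (1:ℝ)) (fun y => y ^ 2) hffb hggb hfgb
    have e1 : (∫ x, (1:ℝ) * x ^ 2 ∂μb) = m₂ := by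
      rw [← hb2]; exact integral_congr_ae (Eventually.of_forall fun x => by ring)
    have e2 : (∫ _x : ℝ, (1:ℝ) ^ 2 ∂μb) = mass := by
      rw [← h1int]; exact integral_congr_ae (Eventually.of_forall fun x => by ring)
    have e3b : (∫ x, (x ^ 2) ^ 2 ∂μb) = m₄ := by
      rw [← hb4]; exact integral_congr_ae (Eventually.of_forall fun x => by ring)
    rw [e1, e2, e3b] at hcsb
    rw [div_le_iff₀ hm₄]
    linarith
end

section
/- Let n = 2q be an even integer with q ≥ 1, and let ν be a Lévy measure on ℝ with ∫ |y|^k ν(dy) < ∞ for k = 2, …, n, satisfying assumption (R_α) for some α ∈ (0,2). For ε > 0 define m_k^ε := ∫_{{|y|≤ε}} y^k ν(dy) for k = 2, …, n, and let Λ̄_ε := min { ν̄(ℝ) : ν̄ a finite positive measure on ℝ with ∫ y^k ν̄(dy) = m_k^ε for k = 2, …, n }. Then there exist a constant C < ∞ and ε_0 > 0 such that Λ̄_ε ≤ C · ν({|y| > ε}) for all ε ∈ (0, ε_0); equivalently, limsup_{ε↓0} Λ̄_ε / ν({|y| > ε}) < ∞. -/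
open MeasureTheory Filter Set
open scoped ENNReal
set_option maxHeartbeats 2000000

namespace Stmt17Aux


lemma tail_ne_top' (ν : Measure ℝ) (hνloc : (∫⁻ y, ENNReal.ofReal (min 1 (y ^ 2)) ∂ν) < ⊤)
    {s : Set ℝ} (hs : MeasurableSet s) {x : ℝ} (hx : 0 < x) (hsub : ∀ y ∈ s, x ≤ |y|) :
    ν s ≠ ⊤ := by
  intro htop
  have hx2 : (0:ℝ) < x ^ 2 := pow_pos hx 2
  have hmin : 0 < min 1 (x ^ 2) := lt_min one_pos hx2
  have h1 : ∫⁻ y in s, ENNReal.ofReal (min 1 (x ^ 2)) ∂ν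
      ≤ ∫⁻ y in s, ENNReal.ofReal (min 1 (y ^ 2)) ∂ν := by
    refine setLIntegral_mono' hs (fun y hy => ?_)
    refine ENNReal.ofReal_le_ofReal (le_min (min_le_left _ _) ?_)
    refine le_trans (min_le_right _ _) ?_
    have h := hsub y hy
    nlinarith [abs_nonneg y, sq_abs y]
  have hne : ENNReal.ofReal (min 1 (x ^ 2)) ≠ 0 := by
    simp only [ne_eq, ENNReal.ofReal_eq_zero, not_le]
    exact hmin
  rw [setLIntegral_const, htop, ENNReal.mul_top hne] at h1
  have h2 : ∫⁻ y in s, ENNReal.ofReal (min 1 (y ^ 2)) ∂ν ≤ ∫⁻ y, ENNReal.ofReal (min 1 (y ^ 2)) ∂ν :=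
    setLIntegral_le_lintegral _ _
  exact absurd (le_trans h1 h2) (by simpa using hνloc.ne)

lemma potter (g F : ℝ → ℝ) (α βp : ℝ) (hα0 : 0 < α) (hβ : α < βp) (hβ2 : βp < 2) (c : ℝ)
    (hgpos : ∀ x, 0 < x → 0 < g x)
    (hgRVhalf : Tendsto (fun x => g ((1/2) * x) / g x) (nhdsWithin 0 (Ioi 0)) (nhds (((1:ℝ)/2) ^ (-α))))
    (hFanti : ∀ x y : ℝ, 0 < x → x ≤ y → F y ≤ F x)
    (htail : Tendsto (fun x => F x / g x) (nhdsWithin 0 (Ioi 0)) (nhds c)) :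
    ∃ C ε₁ : ℝ, 0 < C ∧ 0 < ε₁ ∧ ∀ ε, 0 < ε → ε ≤ ε₁ → ∀ u, 0 < u → u ≤ 1 →
      F (ε * u) ≤ C * u ^ (-βp) * g ε := by
  set s : ℝ := (α + βp) / 2 with hs
  have hs0 : 0 < s := by simp only [hs]; linarith
  have hsα : α < s := by simp only [hs]; linarith
  have hsβ : s < βp := by simp only [hs]; linarith
  have hs2 : s < 2 := lt_trans hsβ hβ2
  set M : ℝ := (2:ℝ) ^ s with hM
  have hM1 : (1:ℝ) < M := Real.one_lt_rpow_iff_of_pos (by norm_num) |>.mpr (Or.inl ⟨by norm_num, hs0⟩)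
  have hM0 : (0:ℝ) < M := lt_trans one_pos hM1
  have hlim_eq : ((1:ℝ)/2) ^ (-α) = (2:ℝ) ^ α := by
    rw [one_div, Real.inv_rpow (by norm_num : (0:ℝ) ≤ 2), ← Real.rpow_neg (by norm_num : (0:ℝ) ≤ 2),
      neg_neg]
  have h2αM : (2:ℝ) ^ α < M := Real.rpow_lt_rpow_of_exponent_lt (by norm_num) hsα
  have ev1 : ∀ᶠ x in nhdsWithin (0:ℝ) (Ioi 0), g ((1/2) * x) ≤ M * g x := by
    have h := hgRVhalf.eventually_le_const (by rw [hlim_eq]; exact h2αM)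
    filter_upwards [h, self_mem_nhdsWithin] with x h1 h2
    have hgx : 0 < g x := hgpos x h2
    calc g ((1/2)*x) = g ((1/2)*x) / g x * g x := by field_simp
    _ ≤ M * g x := mul_le_mul_of_nonneg_right h1 hgx.le
  have ev2 : ∀ᶠ x in nhdsWithin (0:ℝ) (Ioi 0), F x ≤ (|c| + 1) * g x := by
    have h := htail.eventually_le_const (lt_of_le_of_lt (le_abs_self c)
      (lt_add_of_pos_right _ one_pos))
    filter_upwards [h, self_mem_nhdsWithin] with x h1 h2
    have hgx : 0 < g x := hgpos x h2
    calc F x = F x / g x * g x := by field_simp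
    _ ≤ (|c| + 1) * g x := mul_le_mul_of_nonneg_right h1 hgx.le
  obtain ⟨ε₁, hε₁pos, hε₁⟩ : ∃ ε₁, 0 < ε₁ ∧ ∀ x, 0 < x → x ≤ ε₁ →
      g ((1/2) * x) ≤ M * g x ∧ F x ≤ (|c| + 1) * g x := by
    obtain ⟨u, hu, hsub⟩ := mem_nhdsGT_iff_exists_Ioc_subset.mp (ev1.and ev2)
    exact ⟨u, hu, fun x hx1 hx2 => hsub ⟨hx1, hx2⟩⟩
  refine ⟨4 * (|c| + 1), ε₁, by positivity, hε₁pos, ?_⟩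
  intro ε hε hεε₁ u hu hu1
  have hhalfpow : ∀ j : ℕ, ((1:ℝ)/2) ^ j ≤ 1 :=
    fun j => pow_le_one₀ (by norm_num) (by norm_num)
  have hiter : ∀ j : ℕ, ∀ x, 0 < x → x ≤ ε₁ → g (x * (1/2)^j) ≤ M^j * g x := by
    intro j
    induction j with
    | zero => intro x hx hxε; simp
    | succ j ih =>
      intro x hx hxε
      have hx2 : (0:ℝ) < x * (1/2)^j := by positivity
      have hx2' : x * (1/2)^j ≤ ε₁ := le_trans (by nlinarith [hhalfpow j]) hxε
      have hstep := (hε₁ (x * (1/2)^j) hx2 hx2').1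
      have hih := ih x hx hxε
      calc g (x * (1/2)^(j+1)) = g ((1/2) * (x * (1/2)^j)) := by ring_nf
      _ ≤ M * g (x * (1/2)^j) := hstep
      _ ≤ M * (M^j * g x) := mul_le_mul_of_nonneg_left hih hM0.le
      _ = M^(j+1) * g x := by ring
  set j : ℕ := ⌊Real.logb 2 u⁻¹⌋₊ with hj
  have hui : (1:ℝ) ≤ u⁻¹ := (one_le_inv_iff₀).mpr ⟨hu, hu1⟩
  have hlog0 : 0 ≤ Real.logb 2 u⁻¹ := Real.logb_nonneg (by norm_num) hui
  have h2j : (2:ℝ) ^ (j:ℝ) ≤ u⁻¹ := by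
    calc (2:ℝ)^(j:ℝ) ≤ (2:ℝ) ^ Real.logb 2 u⁻¹ :=
      Real.rpow_le_rpow_of_exponent_le (by norm_num) (Nat.floor_le hlog0)
    _ = u⁻¹ := Real.rpow_logb (by norm_num) (by norm_num) (by positivity)
  have h2j1 : u⁻¹ < (2:ℝ) ^ ((j:ℝ)+1) := by
    calc u⁻¹ = (2:ℝ) ^ Real.logb 2 u⁻¹ := (Real.rpow_logb (by norm_num) (by norm_num) (by positivity)).symm
    _ < (2:ℝ) ^ ((j:ℝ)+1) := Real.rpow_lt_rpow_of_exponent_lt (by norm_num) (Nat.lt_floor_add_one _)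
  have hpowid : ((1:ℝ)/2) ^ (j+1) = ((2:ℝ)^((j:ℝ)+1))⁻¹ := by
    rw [one_div, inv_pow, ← Real.rpow_natCast (2:ℝ) (j+1)]
    push_cast
    ring_nf
  have hhalfj : (1/2:ℝ)^(j+1) < u := by
    rw [hpowid]
    have h2pos : (0:ℝ) < (2:ℝ)^((j:ℝ)+1) := Real.rpow_pos_of_pos (by norm_num) _
    have := inv_strictAnti₀ (by positivity : (0:ℝ) < u⁻¹) h2j1
    simpa using this
  have hεu1 : 0 < ε * (1/2:ℝ)^(j+1) := by positivity
  have step1 : F (ε * u) ≤ F (ε * (1/2)^(j+1)) :=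
    hFanti _ _ hεu1 (by nlinarith)
  have step2 : F (ε * (1/2)^(j+1)) ≤ (|c| + 1) * g (ε * (1/2)^(j+1)) :=
    (hε₁ _ hεu1 (le_trans (by nlinarith [hhalfpow (j+1)]) hεε₁)).2
  have step3 : g (ε * (1/2)^(j+1)) ≤ M^(j+1) * g ε := hiter (j+1) ε hε hεε₁
  have step4 : M^(j+1) ≤ 4 * u ^ (-βp) := by
    have e1 : M^(j+1) = ((2:ℝ) ^ (((j:ℝ)+1))) ^ s := by
      rw [hM, ← Real.rpow_natCast ((2:ℝ)^s) (j+1), ← Real.rpow_mul (by norm_num),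
        ← Real.rpow_mul (by norm_num)]
      push_cast
      ring_nf
    have e2 : ((2:ℝ) ^ (((j:ℝ)+1))) ^ s ≤ (2 * u⁻¹) ^ s := by
      apply Real.rpow_le_rpow (Real.rpow_pos_of_pos (by norm_num) _).le _ hs0.le
      calc (2:ℝ) ^ ((j:ℝ)+1) = 2 * (2:ℝ)^(j:ℝ) := by
            rw [Real.rpow_add (by norm_num), Real.rpow_one]; ring
      _ ≤ 2 * u⁻¹ := by linarith
    have e3 : (2 * u⁻¹) ^ s = (2:ℝ)^s * (u⁻¹)^s := Real.mul_rpow (by norm_num) (by positivity)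
    have e4 : (2:ℝ)^s ≤ 4 := by
      have h24 : (2:ℝ)^((2:ℕ):ℝ) = 4 := by rw [Real.rpow_natCast]; norm_num
      have hle := Real.rpow_le_rpow_of_exponent_le (by norm_num : (1:ℝ) ≤ 2) (show s ≤ ((2:ℕ):ℝ) by push_cast; linarith)
      exact hle.trans h24.le
    have e5 : (u⁻¹)^s = u ^ (-s) := by
      rw [Real.inv_rpow hu.le, ← Real.rpow_neg hu.le]
    have e6 : u ^ (-s) ≤ u ^ (-βp) := Real.rpow_le_rpow_of_exponent_ge hu hu1 (by linarith)
    have hups : 0 ≤ u ^ (-s) := (Real.rpow_pos_of_pos hu _).le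
    have hupβ : 0 ≤ u ^ (-βp) := (Real.rpow_pos_of_pos hu _).le
    calc M^(j+1) = ((2:ℝ) ^ (((j:ℝ)+1))) ^ s := e1
    _ ≤ (2 * u⁻¹) ^ s := e2
    _ = (2:ℝ)^s * (u⁻¹)^s := e3
    _ ≤ 4 * u ^ (-βp) := by rw [e5]; nlinarith
  have hgε : 0 < g ε := hgpos ε hε
  have hc1 : (0:ℝ) ≤ |c| + 1 := by positivity
  calc F (ε * u) ≤ (|c|+1) * (M^(j+1) * g ε) :=
    le_trans step1 (le_trans step2 (mul_le_mul_of_nonneg_left step3 hc1))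
  _ ≤ (|c|+1) * ((4 * u ^ (-βp)) * g ε) := by
      exact mul_le_mul_of_nonneg_left (mul_le_mul_of_nonneg_right step4 hgε.le) hc1
  _ = 4 * (|c| + 1) * u ^ (-βp) * g ε := by ring




lemma karamata_side (ρ : Measure ℝ) (k : ℕ) (hk : 2 ≤ k) (α : ℝ) (hα0 : 0 < α) (hα2 : α < 2)
    (c : ℝ) (hc : 0 ≤ c) (g : ℝ → ℝ) (hgpos : ∀ x, 0 < x → 0 < g x)
    (hgRV : ∀ c' : ℝ, 0 < c' → Tendsto (fun x => g (c' * x) / g x)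
      (nhdsWithin 0 (Ioi 0)) (nhds (c' ^ (-α))))
    (htail : Tendsto (fun x => (ρ (Ioi x)).toReal / g x) (nhdsWithin 0 (Ioi 0)) (nhds c))
    (hfin : ∀ x : ℝ, 0 < x → ρ (Ioi x) ≠ ⊤) :
    Tendsto (fun ε => (∫ y in Ioc 0 ε, y ^ k ∂ρ) / (ε ^ k * g ε)) (nhdsWithin 0 (Ioi 0))
      (nhds (c * α / ((k : ℝ) - α))) := by
  have hkR : (2:ℝ) ≤ (k:ℝ) := by exact_mod_cast hk
  have hαk : α < (k:ℝ) := lt_of_lt_of_le hα2 hkR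
  have hk0 : (0:ℝ) < (k:ℝ) := by linarith
  have hk1 : 1 ≤ k := by omega
  set βp : ℝ := (α + 2) / 2 with hβp
  have hβ1 : α < βp := by simp only [hβp]; linarith
  have hβ2 : βp < 2 := by simp only [hβp]; linarith
  set F : ℝ → ℝ := fun x => (ρ (Ioi x)).toReal with hF
  have hFanti : ∀ x y : ℝ, 0 < x → x ≤ y → F y ≤ F x := fun x y hx hxy =>
    ENNReal.toReal_mono (hfin x hx) (measure_mono (Ioi_subset_Ioi hxy))
  obtain ⟨C, ε₁, hC, hε₁pos, hpott⟩ :=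
    potter g F α βp hα0 hβ1 hβ2 c hgpos (hgRV (1/2) (by norm_num)) hFanti htail
  -- the normalized integrand
  set Ffun : ℝ → ℝ → ℝ := fun ε u => (ρ (Ioc (ε*u) ε)).toReal * ((k:ℝ) * u^(k-1)) with hFfun
  set G : ℝ → ℝ → ℝ := fun ε u => Ffun ε u / g ε with hG
  have hmeas : ∀ ε : ℝ, 0 < ε → Measurable (Ffun ε) := by
    intro ε hε
    have hanti : Antitone (fun u => ρ (Ioc (ε*u) ε)) := by
      intro u v huv
      exact measure_mono (Ioc_subset_Ioc_left (mul_le_mul_of_nonneg_left huv hε.le))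
    exact (ENNReal.measurable_toReal.comp hanti.measurable).mul
      ((measurable_id.pow_const (k-1)).const_mul (k:ℝ))
  have hFinIoc : ∀ ε u : ℝ, 0 < ε → 0 < u → ρ (Ioc (ε*u) ε) ≠ ⊤ := fun ε u hε hu =>
    ne_top_of_le_ne_top (hfin (ε*u) (by positivity)) (measure_mono Ioc_subset_Ioi_self)
  have hFb : ∀ ε u : ℝ, 0 < ε → ε ≤ ε₁ → 0 < u → u ≤ 1 →
      (ρ (Ioc (ε*u) ε)).toReal ≤ C * u ^ (-βp) * g ε := by
    intro ε u hε hεε₁ hu hu1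
    refine le_trans ?_ (hpott ε hε hεε₁ u hu hu1)
    exact ENNReal.toReal_mono (hfin (ε*u) (by positivity)) (measure_mono Ioc_subset_Ioi_self)
  -- integrable bound
  set bound : ℝ → ℝ := fun u => (C * u ^ (-βp)) * ((k:ℝ) * u^(k-1)) with hbound
  have hrpow_int : ∀ r : ℝ, -1 < r → IntegrableOn (fun u : ℝ => u ^ r) (Ioc (0:ℝ) 1) volume := by
    intro r hr
    have := intervalIntegral.intervalIntegrable_rpow' (a := 0) (b := 1) hr
    rwa [intervalIntegrable_iff_integrableOn_Ioc_of_le (by norm_num : (0:ℝ) ≤ 1)] at this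
  have hcast : ((k - 1 : ℕ) : ℝ) = (k:ℝ) - 1 := by
    push_cast [Nat.cast_sub hk1]; ring
  have hpow_eq_rpow : ∀ u : ℝ, 0 < u → u ^ (k-1) = u ^ ((k:ℝ) - 1) := by
    intro u hu
    rw [← hcast, Real.rpow_natCast]
  have hbound_int : IntegrableOn bound (Ioc (0:ℝ) 1) volume := by
    have h1 : IntegrableOn (fun u : ℝ => C * (k:ℝ) * u ^ ((k:ℝ) - 1 - βp)) (Ioc (0:ℝ) 1) volume :=
      (hrpow_int ((k:ℝ) - 1 - βp) (by linarith)).const_mul (C * (k:ℝ))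
    refine MeasureTheory.IntegrableOn.congr_fun h1 ?_ measurableSet_Ioc
    intro u hu
    simp only [hbound]
    rw [hpow_eq_rpow u hu.1, show (k:ℝ) - 1 - βp = -βp + ((k:ℝ) - 1) by ring,
      Real.rpow_add hu.1]
    ring
  have hbound_nonneg : ∀ u : ℝ, 0 < u → 0 ≤ bound u := by
    intro u hu
    have := Real.rpow_pos_of_pos hu (-βp)
    have := pow_pos hu (k-1)
    simp only [hbound]
    positivity
  -- DCT
  set limfun : ℝ → ℝ := fun u => (c * u ^ (-α) - c) * ((k:ℝ) * u^(k-1)) with hlimfun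
  have hDCT : Tendsto (fun ε => ∫ u in Ioc (0:ℝ) 1, G ε u) (nhdsWithin 0 (Ioi 0))
      (nhds (∫ u in Ioc (0:ℝ) 1, limfun u)) := by
    apply tendsto_integral_filter_of_dominated_convergence bound
    · filter_upwards [self_mem_nhdsWithin] with ε hε
      exact ((hmeas ε hε).div_const (g ε)).aestronglyMeasurable
    · filter_upwards [Ioc_mem_nhdsGT_of_mem (⟨le_refl 0, hε₁pos⟩ : (0:ℝ) ∈ Ico 0 ε₁)]
        with ε hε
      rw [ae_restrict_iff' measurableSet_Ioc]
      refine Eventually.of_forall (fun u hu => ?_)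
      have hgε := hgpos ε hε.1
      have hFnn : 0 ≤ Ffun ε u := by
        simp only [hFfun]
        have := pow_pos hu.1 (k-1)
        positivity
      have hGnn : 0 ≤ G ε u := div_nonneg hFnn hgε.le
      rw [Real.norm_of_nonneg hGnn]
      rw [div_le_iff₀ hgε] at *
      calc Ffun ε u ≤ (C * u ^ (-βp) * g ε) * ((k:ℝ) * u^(k-1)) := by
            refine mul_le_mul_of_nonneg_right (hFb ε u hε.1 hε.2 hu.1 hu.2) ?_
            have := pow_pos hu.1 (k-1)
            positivity
      _ = bound u * g ε := by simp only [hbound]; ring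
    · exact hbound_int
    · rw [ae_restrict_iff' measurableSet_Ioc]
      refine Eventually.of_forall (fun u hu => ?_)
      -- pointwise limit
      have hu0 : 0 < u := hu.1
      have hmul : Tendsto (fun ε => u * ε) (nhdsWithin (0:ℝ) (Ioi 0)) (nhdsWithin 0 (Ioi 0)) := by
        apply tendsto_nhdsWithin_of_tendsto_nhds_of_eventually_within
        · have h0 : Tendsto (fun ε : ℝ => u * ε) (nhds 0) (nhds 0) := by
            simpa using (continuous_mul_left u).tendsto (0:ℝ)
          exact h0.mono_left nhdsWithin_le_nhds
        · filter_upwards [self_mem_nhdsWithin] with ε hε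
          exact mul_pos hu0 hε
      have t1 : Tendsto (fun ε => F (u * ε) / g (u * ε)) (nhdsWithin (0:ℝ) (Ioi 0)) (nhds c) :=
        htail.comp hmul
      have t2 : Tendsto (fun ε => g (u * ε) / g ε) (nhdsWithin (0:ℝ) (Ioi 0))
          (nhds (u ^ (-α))) := hgRV u hu0
      have t3 : Tendsto (fun ε => F ε / g ε) (nhdsWithin (0:ℝ) (Ioi 0)) (nhds c) := htail
      have t4 : Tendsto (fun ε => (F (u*ε)/g (u*ε)) * (g (u*ε)/g ε) - F ε / g ε)
          (nhdsWithin (0:ℝ) (Ioi 0)) (nhds (c * u ^ (-α) - c)) := (t1.mul t2).sub t3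
      have t5 := t4.mul_const ((k:ℝ) * u^(k-1))
      refine Tendsto.congr' ?_ t5
      filter_upwards [self_mem_nhdsWithin] with ε hε
      have hε0 : (0:ℝ) < ε := hε
      have hguε := hgpos (u*ε) (by positivity)
      have hgε := hgpos ε hε0
      have hIoc : Ioc (ε*u) ε = Ioi (ε*u) \ Ioi ε := (Ioi_diff_Ioi).symm
      have hsub : Ioi ε ⊆ Ioi (ε*u) := Ioi_subset_Ioi (by nlinarith [hu.1, hu.2, hε0])
      have hmd : ρ (Ioc (ε*u) ε) = ρ (Ioi (ε*u)) - ρ (Ioi ε) := by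
        rw [hIoc, measure_diff hsub measurableSet_Ioi.nullMeasurableSet (hfin ε hε0)]
      have htr : (ρ (Ioc (ε*u) ε)).toReal = F (ε*u) - F ε := by
        rw [hmd, ENNReal.toReal_sub_of_le (measure_mono hsub) (hfin (ε*u) (by positivity))]
      have hcomm : ε * u = u * ε := mul_comm ε u
      simp only [hG, hFfun]
      rw [htr, hcomm]
      field_simp
  -- value of limit integral
  have hlim_val : ∫ u in Ioc (0:ℝ) 1, limfun u = c * α / ((k:ℝ) - α) := by
    have hstep : ∫ u in Ioc (0:ℝ) 1, limfun u
        = ∫ u in Ioc (0:ℝ) 1, (c * (k:ℝ) * u ^ ((k:ℝ) - 1 - α) - c * (k:ℝ) * u ^ ((k:ℝ) - 1)) := by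
      refine setIntegral_congr_fun measurableSet_Ioc (fun u hu => ?_)
      simp only [hlimfun]
      rw [hpow_eq_rpow u hu.1, show (k:ℝ) - 1 - α = -α + ((k:ℝ) - 1) by ring,
        Real.rpow_add hu.1]
      ring
    rw [hstep]
    have hint1 : IntegrableOn (fun u : ℝ => c * (k:ℝ) * u ^ ((k:ℝ) - 1 - α)) (Ioc (0:ℝ) 1) volume :=
      (hrpow_int _ (by linarith)).const_mul _
    have hint2 : IntegrableOn (fun u : ℝ => c * (k:ℝ) * u ^ ((k:ℝ) - 1)) (Ioc (0:ℝ) 1) volume :=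
      (hrpow_int _ (by linarith)).const_mul _
    rw [integral_sub hint1 hint2, integral_const_mul, integral_const_mul]
    have hiv : ∀ r : ℝ, -1 < r → ∫ u in Ioc (0:ℝ) 1, u ^ r = 1 / (r + 1) := by
      intro r hr
      rw [← intervalIntegral.integral_of_le (by norm_num : (0:ℝ) ≤ 1)]
      rw [integral_rpow (Or.inl hr)]
      rw [Real.one_rpow, Real.zero_rpow (by linarith : r + 1 ≠ 0)]
      norm_num
    rw [hiv _ (by linarith), hiv _ (by linarith)]
    have h1 : (k:ℝ) - 1 - α + 1 = (k:ℝ) - α := by ring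
    have h2 : (k:ℝ) - 1 + 1 = (k:ℝ) := by ring
    rw [h1, h2]
    have hkα : (k:ℝ) - α ≠ 0 := by linarith
    field_simp
    ring
  rw [← hlim_val]
  -- eventual equality of the normalized moment with ∫ G ε
  refine Tendsto.congr' ?_ hDCT
  filter_upwards [Ioc_mem_nhdsGT_of_mem (⟨le_refl 0, hε₁pos⟩ : (0:ℝ) ∈ Ico 0 ε₁)] with ε hε
  have hε0 : 0 < ε := hε.1
  have hgε := hgpos ε hε0
  -- Step 1: layer cake
  have hid_nn : 0 ≤ᵐ[ρ.restrict (Ioc 0 ε)] id :=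
    Filter.Eventually.mono (ae_restrict_mem measurableSet_Ioc) (fun y hy => hy.1.le)
  have hgi : ∀ t : ℝ, t > 0 → IntervalIntegrable (fun s => (k:ℝ)*s^(k-1)) volume 0 t :=
    fun t _ => (continuous_const.mul (continuous_pow (k-1))).intervalIntegrable 0 t
  have hgnn : ∀ᵐ t ∂(volume.restrict (Ioi (0:ℝ))), 0 ≤ (k:ℝ)*t^(k-1) := by
    rw [ae_restrict_iff' measurableSet_Ioi]
    refine Eventually.of_forall fun t ht => ?_
    have := pow_pos (show (0:ℝ) < t from ht) (k-1)
    positivity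
  have hlc := lintegral_comp_eq_lintegral_meas_lt_mul (ρ.restrict (Ioc 0 ε)) hid_nn
    measurable_id.aemeasurable hgi hgnn
  have hinner : ∀ y : ℝ, (∫ t in (0:ℝ)..y, (k:ℝ)*t^(k-1)) = y^k := by
    intro y
    rw [intervalIntegral.integral_const_mul, integral_pow]
    rw [zero_pow (by omega : k - 1 + 1 ≠ 0), Nat.sub_add_cancel hk1]
    have hden : ((k-1:ℕ):ℝ) + 1 = (k:ℝ) := by rw [hcast]; ring
    rw [hden]
    field_simp; simp
  have hLHS : (∫⁻ ω, ENNReal.ofReal (∫ t in (0:ℝ)..(id ω), (k:ℝ)*t^(k-1)) ∂(ρ.restrict (Ioc 0 ε)))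
      = ∫⁻ y in Ioc (0:ℝ) ε, ENNReal.ofReal (y^k) ∂ρ := by
    apply lintegral_congr
    intro y
    rw [id, hinner]
  have hsetrw : ∀ t : ℝ, 0 < t → (ρ.restrict (Ioc 0 ε)) {a : ℝ | t < a} = ρ (Ioc t ε) := by
    intro t ht
    have : {a : ℝ | t < a} = Ioi t := rfl
    rw [this, Measure.restrict_apply measurableSet_Ioi]
    congr 1
    ext x
    simp only [mem_inter_iff, mem_Ioi, mem_Ioc]
    constructor
    · rintro ⟨h1, _, h3⟩; exact ⟨h1, h3⟩
    · rintro ⟨h1, h2⟩; exact ⟨h1, lt_trans ht h1, h2⟩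
  have hRHS : (∫⁻ t in Ioi (0:ℝ), (ρ.restrict (Ioc 0 ε)) {a : ℝ | t < id a}
        * ENNReal.ofReal ((k:ℝ)*t^(k-1)))
      = ∫⁻ t in Ioi (0:ℝ), ENNReal.ofReal ((ρ (Ioc t ε)).toReal * ((k:ℝ)*t^(k-1))) := by
    refine setLIntegral_congr_fun measurableSet_Ioi (fun t ht => ?_)
    simp only [id]
    rw [hsetrw t ht, ENNReal.ofReal_mul ENNReal.toReal_nonneg,
      ENNReal.ofReal_toReal (ne_top_of_le_ne_top (hfin t ht) (measure_mono Ioc_subset_Ioi_self))]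
  -- real-integral identities
  have hAeq : (∫ y in Ioc (0:ℝ) ε, y ^ k ∂ρ)
      = ∫ t in Ioi (0:ℝ), (ρ (Ioc t ε)).toReal * ((k:ℝ)*t^(k-1)) := by
    have e1 : (∫ y in Ioc (0:ℝ) ε, y ^ k ∂ρ)
        = (∫⁻ y in Ioc (0:ℝ) ε, ENNReal.ofReal (y^k) ∂ρ).toReal := by
      apply integral_eq_lintegral_of_nonneg_ae
      · exact Filter.Eventually.mono (ae_restrict_mem measurableSet_Ioc)
          (fun y hy => pow_nonneg hy.1.le k)
      · exact (continuous_pow k).aestronglyMeasurable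
    have e2 : (∫ t in Ioi (0:ℝ), (ρ (Ioc t ε)).toReal * ((k:ℝ)*t^(k-1)))
        = (∫⁻ t in Ioi (0:ℝ), ENNReal.ofReal ((ρ (Ioc t ε)).toReal * ((k:ℝ)*t^(k-1)))).toReal := by
      apply integral_eq_lintegral_of_nonneg_ae
      · refine Filter.Eventually.mono (ae_restrict_mem measurableSet_Ioi) (fun t ht => ?_)
        have h1 : (0:ℝ) < t := ht
        have := pow_pos h1 (k-1)
        positivity
      · refine Measurable.aestronglyMeasurable ?_
        have hanti : Antitone (fun t : ℝ => ρ (Ioc t ε)) := by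
          intro a b hab
          exact measure_mono (Ioc_subset_Ioc_left hab)
        exact (ENNReal.measurable_toReal.comp hanti.measurable).mul
          ((measurable_id.pow_const (k-1)).const_mul (k:ℝ))
    rw [e1, e2, ← hLHS, hlc, hRHS]
  -- Step 2: substitution t = ε * x
  set f : ℝ → ℝ := fun t => (ρ (Ioc t ε)).toReal * ((k:ℝ)*t^(k-1)) with hfdef
  have hs1 := MeasureTheory.integral_comp_mul_left_Ioi f 0 hε0
  rw [mul_zero] at hs1
  have hs2 : ∫ t in Ioi (0:ℝ), f t = ε * ∫ x in Ioi (0:ℝ), f (ε*x) := by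
    rw [hs1, smul_eq_mul]
    field_simp
  -- Step 3: restrict to Ioc 0 1
  have hzEq : EqOn (fun x => f (ε*x)) (fun _ => (0:ℝ)) (Ioi (1:ℝ)) := by
    intro x hx
    have hxx : (1:ℝ) < x := hx
    have hempty : Ioc (ε*x) ε = ∅ := Ioc_eq_empty (by push_neg; nlinarith)
    simp only [hfdef, hempty, measure_empty, ENNReal.toReal_zero, zero_mul]
  have hmeas2 : Measurable (fun x => f (ε*x)) := by
    have hanti : Antitone (fun x : ℝ => ρ (Ioc (ε*x) ε)) := by
      intro a b hab
      exact measure_mono (Ioc_subset_Ioc_left (mul_le_mul_of_nonneg_left hab hε0.le))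
    refine (ENNReal.measurable_toReal.comp hanti.measurable).mul ?_
    exact (continuous_const.mul (((continuous_const.mul continuous_id).pow (k-1)))).measurable
  have hIntIoc : IntegrableOn (fun x => f (ε*x)) (Ioc (0:ℝ) 1) volume := by
    refine Integrable.mono' (hbound_int.const_mul (g ε * ε^(k-1))) hmeas2.aestronglyMeasurable ?_
    rw [ae_restrict_iff' measurableSet_Ioc]
    refine Eventually.of_forall (fun u hu => ?_)
    have hpos1 : (0:ℝ) ≤ (ε*u)^(k-1) := pow_nonneg (mul_nonneg hε0.le hu.1.le) _
    have hfnn : 0 ≤ f (ε*u) := by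
      simp only [hfdef]
      exact mul_nonneg ENNReal.toReal_nonneg (mul_nonneg (Nat.cast_nonneg k) hpos1)
    rw [Real.norm_of_nonneg hfnn]
    simp only [hfdef, hbound]
    calc (ρ (Ioc (ε*u) ε)).toReal * ((k:ℝ)*(ε*u)^(k-1))
        ≤ (C * u ^ (-βp) * g ε) * ((k:ℝ)*(ε*u)^(k-1)) := by
          refine mul_le_mul_of_nonneg_right (hFb ε u hε0 hε.2 hu.1 hu.2) (by positivity)
    _ = g ε * ε^(k-1) * (C * u ^ (-βp) * ((k:ℝ) * u^(k-1))) := by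
          rw [mul_pow]; ring
  have hIntIoi1 : IntegrableOn (fun x => f (ε*x)) (Ioi (1:ℝ)) volume :=
    (integrableOn_congr_fun hzEq measurableSet_Ioi).mpr (integrableOn_zero)
  have hsplit : ∫ x in Ioi (0:ℝ), f (ε*x) = ∫ x in Ioc (0:ℝ) 1, f (ε*x) := by
    rw [← Ioc_union_Ioi_eq_Ioi (zero_le_one : (0:ℝ) ≤ 1),
      setIntegral_union (Ioc_disjoint_Ioi le_rfl) measurableSet_Ioi hIntIoc hIntIoi1]
    rw [setIntegral_congr_fun measurableSet_Ioi hzEq]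
    simp
  have hpull : ∫ x in Ioc (0:ℝ) 1, f (ε*x) = ε^(k-1) * ∫ x in Ioc (0:ℝ) 1, Ffun ε x := by
    rw [← integral_const_mul]
    refine setIntegral_congr_fun measurableSet_Ioc (fun u hu => ?_)
    simp only [hfdef, hFfun, mul_pow]
    ring
  have hεk : ε * ε^(k-1) = ε^k := by
    rw [← pow_succ']
    congr 1
    omega
  have hGint : ∫ u in Ioc (0:ℝ) 1, G ε u = (∫ u in Ioc (0:ℝ) 1, Ffun ε u) / g ε := by
    simp only [hG]
    exact MeasureTheory.integral_div (g ε) _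
  show ∫ u in Ioc (0:ℝ) 1, G ε u = (∫ y in Ioc (0:ℝ) ε, y ^ k ∂ρ) / (ε ^ k * g ε)
  rw [hAeq, hs2, hsplit, hpull, hGint, ← hεk]
  field_simp



/-- moment curve -/
noncomputable def vv (d : ℕ) (u : ℝ) : Fin d → ℝ := fun j => u ^ ((j:ℕ) + 2)

/-- cone of moment vectors of finite atomic measures on `[-1,1]` -/
def coneSet (d : ℕ) : Set (Fin d → ℝ) :=
  {x | ∃ (M : ℕ) (w : Fin M → ℝ) (u : Fin M → ℝ),
    (∀ i, 0 ≤ w i) ∧ (∀ i, u i ∈ Icc (-1:ℝ) 1) ∧ x = ∑ i, w i • vv d (u i)}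

lemma coneSet_zero_mem (d : ℕ) : (0 : Fin d → ℝ) ∈ coneSet d :=
  ⟨0, Fin.elim0, Fin.elim0, fun i => i.elim0, fun i => i.elim0, by simp⟩

lemma coneSet_add_mem {d : ℕ} {x y : Fin d → ℝ} (hx : x ∈ coneSet d) (hy : y ∈ coneSet d) :
    x + y ∈ coneSet d := by
  obtain ⟨M₁, w₁, u₁, hw₁, hu₁, hx⟩ := hx
  obtain ⟨M₂, w₂, u₂, hw₂, hu₂, hy⟩ := hy
  refine ⟨M₁ + M₂, Fin.append w₁ w₂, Fin.append u₁ u₂, ?_, ?_, ?_⟩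
  · intro i
    rcases lt_or_ge (i : ℕ) M₁ with h | h
    · have : i = Fin.castAdd M₂ ⟨i, h⟩ := by ext; simp
      rw [this, Fin.append_left]
      exact hw₁ _
    · have hi2 : (i : ℕ) - M₁ < M₂ := by omega
      have : i = Fin.natAdd M₁ ⟨(i:ℕ) - M₁, hi2⟩ := by ext; simp; omega
      rw [this, Fin.append_right]
      exact hw₂ _
  · intro i
    rcases lt_or_ge (i : ℕ) M₁ with h | h
    · have : i = Fin.castAdd M₂ ⟨i, h⟩ := by ext; simp
      rw [this, Fin.append_left]
      exact hu₁ _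
    · have hi2 : (i : ℕ) - M₁ < M₂ := by omega
      have : i = Fin.natAdd M₁ ⟨(i:ℕ) - M₁, hi2⟩ := by ext; simp; omega
      rw [this, Fin.append_right]
      exact hu₂ _
  · rw [hx, hy, Fin.sum_univ_add]
    congr 1
    · exact Finset.sum_congr rfl fun i _ => by rw [Fin.append_left, Fin.append_left]
    · exact Finset.sum_congr rfl fun i _ => by rw [Fin.append_right, Fin.append_right]

lemma coneSet_smul_mem {d : ℕ} {x : Fin d → ℝ} {a : ℝ} (ha : 0 ≤ a) (hx : x ∈ coneSet d) :
    a • x ∈ coneSet d := by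
  obtain ⟨M, w, u, hw, hu, hx⟩ := hx
  refine ⟨M, fun i => a * w i, u, fun i => mul_nonneg ha (hw i), hu, ?_⟩
  rw [hx, Finset.smul_sum]
  exact Finset.sum_congr rfl fun i _ => by rw [smul_smul]

lemma coneSet_convex (d : ℕ) : Convex ℝ (coneSet d) := by
  intro x hx y hy a b ha hb _
  exact coneSet_add_mem (coneSet_smul_mem ha hx) (coneSet_smul_mem hb hy)

lemma vv_mem_coneSet {d : ℕ} {u : ℝ} (hu : u ∈ Icc (-1:ℝ) 1) : vv d u ∈ coneSet d := by
  refine ⟨1, fun _ => 1, fun _ => u, fun _ => zero_le_one, fun _ => hu, ?_⟩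
  simp

/-- reference nodes -/
noncomputable def zz (d : ℕ) : Fin d → ℝ := fun i => ((i:ℕ) + 1) / (d:ℝ)

lemma zz_pos {d : ℕ} (i : Fin d) : 0 < zz d i := by
  have hd : 0 < d := i.pos
  have : (0:ℝ) < (d:ℝ) := by exact_mod_cast hd
  unfold zz
  positivity

lemma zz_le_one {d : ℕ} (i : Fin d) : zz d i ≤ 1 := by
  have hd : 0 < d := i.pos
  have hdr : (0:ℝ) < (d:ℝ) := by exact_mod_cast hd
  unfold zz
  rw [div_le_one hdr]
  have : (i:ℕ) + 1 ≤ d := i.isLt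
  exact_mod_cast this

lemma zz_strictMono {d : ℕ} : StrictMono (zz d) := by
  intro i j hij
  have hd : 0 < d := i.pos
  have hdr : (0:ℝ) < (d:ℝ) := by exact_mod_cast hd
  unfold zz
  apply div_lt_div_of_pos_right ?_ hdr
  have h : (i:ℕ) < (j:ℕ) := hij
  linarith [show ((i:ℕ):ℝ) < ((j:ℕ):ℝ) from by exact_mod_cast h]

/-- node matrix -/
noncomputable def Amat (d : ℕ) : Matrix (Fin d) (Fin d) ℝ :=
  Matrix.of fun i j => zz d j ^ ((i:ℕ) + 2)

lemma Amat_det_ne_zero (d : ℕ) : (Amat d).det ≠ 0 := by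
  have hA : Amat d = (Matrix.of fun i j : Fin d => zz d i ^ ((j:ℕ) + 2)).transpose := by
    ext i j; rfl
  rw [hA, Matrix.det_transpose]
  have h2 : (Matrix.of fun i j : Fin d => zz d i ^ ((j:ℕ) + 2))
      = Matrix.diagonal (fun i => zz d i ^ 2) * Matrix.vandermonde (zz d) := by
    ext i j
    simp [Matrix.diagonal_mul, Matrix.vandermonde]
    ring
  rw [h2, Matrix.det_mul, Matrix.det_diagonal, Matrix.det_vandermonde]
  apply mul_ne_zero
  · exact Finset.prod_ne_zero_iff.mpr fun i _ => pow_ne_zero _ (zz_pos i).ne'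
  · refine Finset.prod_ne_zero_iff.mpr fun i _ => ?_
    refine Finset.prod_ne_zero_iff.mpr fun j hj => ?_
    have : i < j := by simpa using hj
    exact sub_ne_zero.mpr (ne_of_gt (zz_strictMono this))


lemma Amat_isUnit_det (d : ℕ) : IsUnit (Amat d).det :=
  isUnit_iff_ne_zero.mpr (Amat_det_ne_zero d)

lemma Amat_mulVec_inv (d : ℕ) (x : Fin d → ℝ) :
    (Amat d).mulVec ((Amat d)⁻¹.mulVec x) = x := by
  rw [Matrix.mulVec_mulVec, Matrix.mul_nonsing_inv _ (Amat_isUnit_det d), Matrix.one_mulVec]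

lemma Amat_inv_mulVec (d : ℕ) (x : Fin d → ℝ) :
    (Amat d)⁻¹.mulVec ((Amat d).mulVec x) = x := by
  rw [Matrix.mulVec_mulVec, Matrix.nonsing_inv_mul _ (Amat_isUnit_det d), Matrix.one_mulVec]

lemma Amat_mulVec_eq_sum (d : ℕ) (w : Fin d → ℝ) :
    (Amat d).mulVec w = ∑ i, w i • vv d (zz d i) := by
  funext j
  rw [Matrix.mulVec, Finset.sum_apply]
  simp only [dotProduct, Amat, vv, Pi.smul_apply, smul_eq_mul, Matrix.of_apply]
  exact Finset.sum_congr rfl fun i _ => by ring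

lemma x0_mem_interior (d : ℕ) :
    (∑ i : Fin d, vv d (zz d i)) ∈ interior (coneSet d) := by
  set U : Set (Fin d → ℝ) := {x | ∀ j, 0 < ((Amat d)⁻¹.mulVec x) j} with hU
  have hUopen : IsOpen U := by
    have : U = ⋂ j, (fun x => ((Amat d)⁻¹.mulVec x) j) ⁻¹' (Ioi 0) := by
      ext x; simp [hU, mem_iInter]
    rw [this]
    refine isOpen_iInter_of_finite fun j => ?_
    refine IsOpen.preimage ?_ isOpen_Ioi
    have : Continuous fun x : Fin d → ℝ => ∑ i, (Amat d)⁻¹ j i * x i := by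
      exact continuous_finset_sum _ fun i _ => continuous_const.mul (continuous_apply i)
    exact this
  have hUsub : U ⊆ coneSet d := by
    intro x hx
    have hrep : x = ∑ i, (((Amat d)⁻¹.mulVec x) i) • vv d (zz d i) := by
      rw [← Amat_mulVec_eq_sum, Amat_mulVec_inv]
    exact ⟨d, fun i => ((Amat d)⁻¹.mulVec x) i, zz d,
      fun i => (hx i).le, fun i => ⟨le_trans (by norm_num) (zz_pos i).le, zz_le_one i⟩, hrep⟩
  have hx0 : (∑ i : Fin d, vv d (zz d i)) ∈ U := by
    intro j
    have : (∑ i : Fin d, vv d (zz d i)) = (Amat d).mulVec (fun _ => 1) := by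
      rw [Amat_mulVec_eq_sum]
      exact Finset.sum_congr rfl fun i _ => by rw [one_smul]
    rw [this, Amat_inv_mulVec]
    exact one_pos
  exact mem_interior.mpr ⟨U, hUsub, hUopen, hx0⟩

lemma cone_main (d : ℕ) (Γ : Fin d → ℝ)
    (hpos : ∀ lam : Fin d → ℝ, lam ≠ 0 →
      (∀ u ∈ Icc (-1:ℝ) 1, 0 ≤ ∑ j, lam j * u ^ ((j:ℕ)+2)) → 0 < ∑ j, lam j * Γ j) :
    ∃ η₀ : ℝ, 0 < η₀ ∧ Γ - η₀ • (∑ i : Fin d, vv d (zz d i)) ∈ coneSet d := by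
  classical
  set x₀ : Fin d → ℝ := ∑ i : Fin d, vv d (zz d i) with hx₀
  set S : Set (Fin d → ℝ) := {lam | ‖lam‖ = 1 ∧ ∀ u ∈ Icc (-1:ℝ) 1,
    0 ≤ ∑ j, lam j * u ^ ((j:ℕ)+2)} with hS
  obtain ⟨m, hm0, hm⟩ : ∃ m : ℝ, 0 < m ∧ ∀ lam ∈ S, m ≤ ∑ j, lam j * Γ j := by
    by_cases hne : S.Nonempty
    · have hTclosed : IsClosed {lam : Fin d → ℝ | ∀ u ∈ Icc (-1:ℝ) 1,
          0 ≤ ∑ j, lam j * u ^ ((j:ℕ)+2)} := by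
        have : {lam : Fin d → ℝ | ∀ u ∈ Icc (-1:ℝ) 1, 0 ≤ ∑ j, lam j * u ^ ((j:ℕ)+2)}
            = ⋂ (u : ℝ), {lam : Fin d → ℝ | u ∈ Icc (-1:ℝ) 1 → 0 ≤ ∑ j, lam j * u ^ ((j:ℕ)+2)} := by
          ext lam
          simp only [mem_setOf_eq, mem_iInter]
        rw [this]
        refine isClosed_iInter fun u => ?_
        by_cases hu : u ∈ Icc (-1:ℝ) 1
        · simp only [hu, forall_true_left]
          refine isClosed_le continuous_const ?_
          exact continuous_finset_sum _ fun j _ => (continuous_apply j).mul continuous_const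
        · have huniv : {lam : Fin d → ℝ | u ∈ Icc (-1:ℝ) 1 → 0 ≤ ∑ j, lam j * u ^ ((j:ℕ)+2)}
              = univ := eq_univ_of_forall (fun lam h => absurd h hu)
          rw [huniv]
          exact isClosed_univ
      have hScompact : IsCompact S := by
        have hsub : S = Metric.sphere (0 : Fin d → ℝ) 1 ∩
            {lam | ∀ u ∈ Icc (-1:ℝ) 1, 0 ≤ ∑ j, lam j * u ^ ((j:ℕ)+2)} := by
          ext lam
          constructor
          · rintro ⟨h1, h2⟩
            exact ⟨mem_sphere_zero_iff_norm.mpr h1, h2⟩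
          · rintro ⟨h1, h2⟩
            exact ⟨mem_sphere_zero_iff_norm.mp h1, h2⟩
        rw [hsub]
        exact (isCompact_sphere 0 1).inter_right hTclosed
      obtain ⟨lam₀, hlam₀S, hlam₀min⟩ := hScompact.exists_isMinOn hne
        ((continuous_finset_sum _ fun j _ => (continuous_apply j).mul continuous_const).continuousOn)
      refine ⟨∑ j, lam₀ j * Γ j, ?_, fun lam hlam => hlam₀min hlam⟩
      refine hpos lam₀ ?_ hlam₀S.2
      intro h0
      rw [h0] at hlam₀S
      exact absurd hlam₀S.1 (by simp)
    · exact ⟨1, one_pos, fun lam hlam => absurd ⟨lam, hlam⟩ hne⟩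
  set Cx : ℝ := (∑ j, |x₀ j|) + 1 with hCx
  have hCx0 : 0 < Cx := by
    have : 0 ≤ ∑ j, |x₀ j| := Finset.sum_nonneg fun j _ => abs_nonneg _
    simp only [hCx]; linarith
  have hdual_x₀ : ∀ lam ∈ S, ∑ j, lam j * x₀ j ≤ Cx := by
    intro lam hlam
    have h1 : ∑ j, lam j * x₀ j ≤ ∑ j, |x₀ j| := by
      refine Finset.sum_le_sum fun j _ => ?_
      calc lam j * x₀ j ≤ |lam j * x₀ j| := le_abs_self _
      _ = |lam j| * |x₀ j| := abs_mul _ _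
      _ ≤ 1 * |x₀ j| := by
          refine mul_le_mul_of_nonneg_right ?_ (abs_nonneg _)
          calc |lam j| = ‖lam j‖ := rfl
          _ ≤ ‖lam‖ := norm_le_pi_norm lam j
          _ = 1 := hlam.1
      _ = |x₀ j| := one_mul _
    simp only [hCx]; linarith
  set η₀ : ℝ := m / (2 * Cx) with hη₀
  have hη₀pos : 0 < η₀ := by positivity
  have hclos : ∀ t : ℝ, 0 ≤ t → t ≤ 2 * η₀ → Γ - t • x₀ ∈ closure (coneSet d) := by
    intro t ht0 ht1
    by_contra hcon
    obtain ⟨f, u, hfu, hux⟩ := geometric_hahn_banach_closed_point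
      ((coneSet_convex d).closure) isClosed_closure hcon
    have hu0 : 0 < u := by
      have := hfu 0 (subset_closure (coneSet_zero_mem d))
      simpa using this
    have hle : ∀ b ∈ coneSet d, f b ≤ 0 := by
      intro b hb
      by_contra hfb
      push_neg at hfb
      have hr : (0:ℝ) ≤ 2 * u / f b := by positivity
      have hmem := coneSet_smul_mem hr hb
      have := hfu _ (subset_closure hmem)
      rw [_root_.map_smul] at this
      simp only [smul_eq_mul] at this
      rw [div_mul_cancel₀ _ hfb.ne'] at this
      linarith
    set e : Fin d → (Fin d → ℝ) := fun i => fun j => if i = j then 1 else 0 with he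
    set lam : Fin d → ℝ := fun j => -(f (e j)) with hlam
    have hflam : ∀ y : Fin d → ℝ, f y = -∑ j, lam j * y j := by
      intro y
      have hy : y = ∑ i, y i • e i := pi_eq_sum_univ y
      calc f y = f (∑ i, y i • e i) := by rw [← hy]
      _ = ∑ i, y i • f (e i) := by rw [map_sum]; exact Finset.sum_congr rfl fun i _ => map_smul f _ _
      _ = -∑ j, lam j * y j := by
          simp only [hlam, smul_eq_mul]
          rw [← Finset.sum_neg_distrib]
          exact Finset.sum_congr rfl fun i _ => by ring
    have hlamdual : ∀ v ∈ Icc (-1:ℝ) 1, 0 ≤ ∑ j, lam j * v ^ ((j:ℕ)+2) := by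
      intro v hv
      have := hle (vv d v) (vv_mem_coneSet hv)
      rw [hflam] at this
      simp only [vv] at this ⊢
      linarith
    have hlamne : lam ≠ 0 := by
      intro h0
      have := hux
      rw [hflam] at this
      rw [h0] at this
      simp at this
      linarith
    have hnormpos : 0 < ‖lam‖ := norm_pos_iff.mpr hlamne
    set nlam : Fin d → ℝ := ‖lam‖⁻¹ • lam with hnlam
    have hnS : nlam ∈ S := by
      constructor
      · rw [hnlam, norm_smul, norm_inv, norm_norm, inv_mul_cancel₀ hnormpos.ne']
      · intro v hv
        have := hlamdual v hv
        simp only [hnlam, Pi.smul_apply, smul_eq_mul]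
        rw [show ∑ j, ‖lam‖⁻¹ * lam j * v ^ ((j:ℕ)+2)
            = ‖lam‖⁻¹ * ∑ j, lam j * v ^ ((j:ℕ)+2) by
          rw [Finset.mul_sum]; exact Finset.sum_congr rfl fun j _ => by ring]
        positivity
    -- contradiction
    have hlt : ∑ j, lam j * (Γ - t • x₀) j < 0 := by
      have := hux
      rw [hflam] at this
      linarith
    have hge : 0 ≤ ∑ j, nlam j * (Γ - t • x₀) j := by
      have hsplit : ∑ j, nlam j * (Γ - t • x₀) j
          = (∑ j, nlam j * Γ j) - t * ∑ j, nlam j * x₀ j := by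
        rw [Finset.mul_sum, ← Finset.sum_sub_distrib]
        refine Finset.sum_congr rfl fun j _ => ?_
        simp only [Pi.sub_apply, Pi.smul_apply, smul_eq_mul]
        ring
      rw [hsplit]
      have h1 := hm nlam hnS
      have h2 := hdual_x₀ nlam hnS
      have h3 : t * ∑ j, nlam j * x₀ j ≤ t * Cx := mul_le_mul_of_nonneg_left h2 ht0
      have h4 : t * Cx ≤ 2 * η₀ * Cx := mul_le_mul_of_nonneg_right ht1 hCx0.le
      have h5 : 2 * η₀ * Cx = m := by
        simp only [hη₀]
        field_simp
      linarith
    have hsc : ∑ j, nlam j * (Γ - t • x₀) j = ‖lam‖⁻¹ * ∑ j, lam j * (Γ - t • x₀) j := by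
      rw [Finset.mul_sum]
      exact Finset.sum_congr rfl fun j _ => by simp only [hnlam, Pi.smul_apply, smul_eq_mul]; ring
    rw [hsc] at hge
    have hneg : ‖lam‖⁻¹ * ∑ j, lam j * (Γ - t • x₀) j < 0 :=
      mul_neg_of_pos_of_neg (inv_pos.mpr hnormpos) hlt
    linarith
  -- interior combination
  set t₀ : ℝ := min η₀ (1/2) with ht₀
  have ht₀pos : 0 < t₀ := lt_min hη₀pos (by norm_num)
  have ht₀η : t₀ ≤ η₀ := min_le_left _ _
  have ht₀half : t₀ ≤ 1/2 := min_le_right _ _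
  have h1t₀ : (1 - t₀) ≠ 0 := by
    have : t₀ < 1 := lt_of_le_of_lt ht₀half (by norm_num)
    linarith
  set y : Fin d → ℝ := (1 - t₀)⁻¹ • (Γ - (η₀ + t₀) • x₀) with hy
  have hymem : y ∈ closure (coneSet d) := by
    have h1 : Γ - (η₀ + t₀) • x₀ ∈ closure (coneSet d) :=
      hclos (η₀ + t₀) (by linarith) (by linarith)
    have h2 : (0:ℝ) ≤ (1 - t₀)⁻¹ := by
      have ht1 : t₀ < 1 := lt_of_le_of_lt ht₀half (by norm_num)
      exact inv_nonneg.mpr (by linarith)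
    exact map_mem_closure (continuous_const_smul _) h1 (fun x hx => coneSet_smul_mem h2 hx)
  have hcombo : Γ - η₀ • x₀ = t₀ • x₀ + (1 - t₀) • y := by
    rw [hy, smul_inv_smul₀ h1t₀, add_smul]
    abel
  have hint : Γ - η₀ • x₀ ∈ interior (coneSet d) := by
    rw [hcombo]
    exact (coneSet_convex d).combo_interior_closure_mem_interior (x0_mem_interior d) hymem
      ht₀pos (by linarith [lt_of_le_of_lt ht₀half (show (1:ℝ)/2 < 1 by norm_num)])
      (by ring)
  exact ⟨η₀, hη₀pos, interior_subset hint⟩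



lemma hiv_Ioc (r : ℝ) (hr : -1 < r) : ∫ x in Ioc (0:ℝ) 1, x ^ r = 1/(r+1) := by
  rw [← intervalIntegral.integral_of_le (by norm_num : (0:ℝ) ≤ 1)]
  rw [integral_rpow (Or.inl hr)]
  rw [Real.one_rpow, Real.zero_rpow (by linarith : r + 1 ≠ 0)]
  norm_num

lemma rpow_int_Ioc (r : ℝ) (hr : -1 < r) :
    IntegrableOn (fun u : ℝ => u ^ r) (Ioc (0:ℝ) 1) volume := by
  have := intervalIntegral.intervalIntegrable_rpow' (a := 0) (b := 1) hr
  rwa [intervalIntegrable_iff_integrableOn_Ioc_of_le (by norm_num : (0:ℝ) ≤ 1)] at this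

lemma side_int (d : ℕ) (lam : Fin d → ℝ) (α : ℝ) (hα0 : 0 < α) (hα2 : α < 2) (σ : ℝ) :
    IntegrableOn (fun x => (∑ j, lam j * (σ*x) ^ ((j:ℕ)+2)) * (α * x ^ (-α-1)))
      (Ioc (0:ℝ) 1) volume ∧
    ∫ x in Ioc (0:ℝ) 1, (∑ j, lam j * (σ*x) ^ ((j:ℕ)+2)) * (α * x ^ (-α-1))
      = ∑ j, lam j * σ^((j:ℕ)+2) * (α / (((j:ℕ):ℝ) + 2 - α)) := by
  have hEq : EqOn (fun x => (∑ j, lam j * (σ*x) ^ ((j:ℕ)+2)) * (α * x ^ (-α-1)))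
      (fun x => ∑ j, (lam j * σ^((j:ℕ)+2) * α) * x ^ (((j:ℕ):ℝ) + 1 - α)) (Ioc (0:ℝ) 1) := by
    intro x hx
    have hx0 : 0 < x := hx.1
    simp only
    rw [Finset.sum_mul]
    refine Finset.sum_congr rfl fun j _ => ?_
    have key : x ^ ((j:ℕ)+2) * x ^ (-α-1) = x ^ (((j:ℕ):ℝ) + 1 - α) := by
      rw [← Real.rpow_natCast x ((j:ℕ)+2), ← Real.rpow_add hx0]
      congr 1
      push_cast
      ring
    rw [mul_pow, ← key]
    ring
  have hint_each : ∀ j : Fin d, IntegrableOn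
      (fun x : ℝ => (lam j * σ^((j:ℕ)+2) * α) * x ^ (((j:ℕ):ℝ) + 1 - α)) (Ioc (0:ℝ) 1) volume :=
    fun j => (rpow_int_Ioc _ (by
      have : (0:ℝ) ≤ ((j:ℕ):ℝ) := Nat.cast_nonneg _
      linarith)).const_mul _
  have hint_sum : IntegrableOn
      (fun x : ℝ => ∑ j, (lam j * σ^((j:ℕ)+2) * α) * x ^ (((j:ℕ):ℝ) + 1 - α)) (Ioc (0:ℝ) 1) volume :=
    MeasureTheory.integrable_finset_sum _ fun j _ => hint_each j
  constructor
  · exact (integrableOn_congr_fun hEq measurableSet_Ioc).mpr hint_sum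
  · rw [setIntegral_congr_fun measurableSet_Ioc hEq]
    rw [MeasureTheory.integral_finset_sum _ fun j _ => hint_each j]
    refine Finset.sum_congr rfl fun j _ => ?_
    rw [MeasureTheory.integral_const_mul, hiv_Ioc _ (by
      have : (0:ℝ) ≤ ((j:ℕ):ℝ) := Nat.cast_nonneg _
      linarith)]
    have hne : ((j:ℕ):ℝ) + 2 - α ≠ 0 := by
      have : (0:ℝ) ≤ ((j:ℕ):ℝ) := Nat.cast_nonneg _
      linarith
    rw [show (((j:ℕ):ℝ) + 1 - α) + 1 = ((j:ℕ):ℝ) + 2 - α by ring]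
    field_simp

lemma gamma_pos (d : ℕ) (α cp cm : ℝ) (hα0 : 0 < α) (hα2 : α < 2)
    (hcp : 0 ≤ cp) (hcm : 0 ≤ cm) (hcpm : 0 < cp + cm) :
    ∀ lam : Fin d → ℝ, lam ≠ 0 →
      (∀ u ∈ Icc (-1:ℝ) 1, 0 ≤ ∑ j, lam j * u ^ ((j:ℕ)+2)) →
      0 < ∑ j, lam j * (α * (cp + (-1:ℝ)^((j:ℕ)) * cm) / (((j:ℕ):ℝ) + 2 - α)) := by
  intro lam hne hdual
  classical
  set P : Polynomial ℝ := ∑ j : Fin d, Polynomial.C (lam j) * Polynomial.X ^ ((j:ℕ)+2) with hP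
  have heval : ∀ y : ℝ, P.eval y = ∑ j, lam j * y ^ ((j:ℕ)+2) := by
    intro y
    simp [hP, Polynomial.eval_finset_sum]
  have hPne : P ≠ 0 := by
    obtain ⟨j₀, hj₀⟩ : ∃ j₀, lam j₀ ≠ 0 := by
      by_contra hcon
      push_neg at hcon
      exact hne (funext fun j => hcon j)
    intro hP0
    have hcoeff : P.coeff ((j₀:ℕ)+2) = lam j₀ := by
      rw [hP, Polynomial.finset_sum_coeff]
      rw [Finset.sum_eq_single j₀]
      · rw [Polynomial.coeff_C_mul, Polynomial.coeff_X_pow, if_pos rfl, mul_one]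
      · intro j _ hjne
        rw [Polynomial.coeff_C_mul, Polynomial.coeff_X_pow, if_neg, mul_zero]
        intro habs
        exact hjne (Fin.ext (by omega))
      · intro h; exact absurd (Finset.mem_univ j₀) h
    rw [hP0] at hcoeff
    simp at hcoeff
    exact hj₀ hcoeff.symm
  have hRfin : {x : ℝ | P.IsRoot x}.Finite := Polynomial.finite_setOf_isRoot hPne
  -- the two side integrals
  have hsidep := side_int d lam α hα0 hα2 1
  have hsidem := side_int d lam α hα0 hα2 (-1)
  set fp : ℝ → ℝ := fun x => (∑ j, lam j * ((1:ℝ)*x) ^ ((j:ℕ)+2)) * (α * x ^ (-α-1)) with hfp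
  set fm : ℝ → ℝ := fun x => (∑ j, lam j * ((-1:ℝ)*x) ^ ((j:ℕ)+2)) * (α * x ^ (-α-1)) with hfm
  have hnnp : ∀ x ∈ Ioc (0:ℝ) 1, 0 ≤ fp x := by
    intro x hx
    refine mul_nonneg ?_ (mul_nonneg hα0.le (Real.rpow_nonneg hx.1.le _))
    exact hdual (1*x) ⟨by nlinarith [hx.1, hx.2], by nlinarith [hx.1, hx.2]⟩
  have hnnm : ∀ x ∈ Ioc (0:ℝ) 1, 0 ≤ fm x := by
    intro x hx
    refine mul_nonneg ?_ (mul_nonneg hα0.le (Real.rpow_nonneg hx.1.le _))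
    exact hdual (-1*x) ⟨by nlinarith [hx.1, hx.2], by nlinarith [hx.1, hx.2]⟩
  have hIpnn : 0 ≤ ∫ x in Ioc (0:ℝ) 1, fp x := setIntegral_nonneg measurableSet_Ioc hnnp
  have hImnn : 0 ≤ ∫ x in Ioc (0:ℝ) 1, fm x := setIntegral_nonneg measurableSet_Ioc hnnm
  -- key positivity of one side
  have hposside : ∀ σ : ℝ, σ = 1 ∨ σ = -1 →
      0 < ∫ x in Ioc (0:ℝ) 1, (∑ j, lam j * (σ*x) ^ ((j:ℕ)+2)) * (α * x ^ (-α-1)) := by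
    intro σ hσ
    have hσne : σ ≠ 0 := by rcases hσ with h | h <;> rw [h] <;> norm_num
    have hσmem : ∀ x : ℝ, x ∈ Ioc (0:ℝ) 1 → σ * x ∈ Icc (-1:ℝ) 1 := by
      intro x hx
      rcases hσ with h | h <;> rw [h] <;> constructor <;> nlinarith [hx.1, hx.2]
    have hnn : ∀ x ∈ Ioc (0:ℝ) 1, 0 ≤ (∑ j, lam j * (σ*x) ^ ((j:ℕ)+2)) * (α * x ^ (-α-1)) := by
      intro x hx
      exact mul_nonneg (hdual _ (hσmem x hx)) (mul_nonneg hα0.le (Real.rpow_nonneg hx.1.le _))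
    rw [setIntegral_pos_iff_support_of_nonneg_ae
      (Filter.Eventually.mono (ae_restrict_mem measurableSet_Ioc) hnn) (side_int d lam α hα0 hα2 σ).1]
    set R : Set ℝ := {x : ℝ | P.IsRoot (σ * x)} with hR
    have hRfin' : R.Finite := by
      have : R = (fun x : ℝ => σ * x) ⁻¹' {x : ℝ | P.IsRoot x} := rfl
      rw [this]
      exact Set.Finite.preimage ((mul_right_injective₀ hσne).injOn) hRfin
    have hsub : Ioc (0:ℝ) 1 \ R ⊆
        Function.support (fun x => (∑ j, lam j * (σ*x) ^ ((j:ℕ)+2)) * (α * x ^ (-α-1))) ∩ Ioc 0 1 := by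
      rintro x ⟨hx, hxR⟩
      refine ⟨?_, hx⟩
      rw [Function.mem_support]
      intro h0
      have hpx : (∑ j, lam j * (σ*x) ^ ((j:ℕ)+2)) ≠ 0 := by
        rw [← heval]
        exact hxR
      have hrp : α * x ^ (-α-1) ≠ 0 :=
        (mul_pos hα0 (Real.rpow_pos_of_pos hx.1 _)).ne'
      exact (mul_ne_zero hpx hrp) h0
    refine lt_of_lt_of_le ?_ (measure_mono hsub)
    have h1 : volume (Ioc (0:ℝ) 1) ≤ volume (Ioc (0:ℝ) 1 \ R) + volume R := by
      refine le_trans (measure_mono ?_) (measure_union_le _ _)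
      intro x hx
      by_cases hxR : x ∈ R
      · exact Or.inr hxR
      · exact Or.inl ⟨hx, hxR⟩
    rw [Set.Finite.measure_zero hRfin' volume, add_zero] at h1
    have h2 : volume (Ioc (0:ℝ) 1) = 1 := by
      rw [Real.volume_Ioc]
      norm_num
    rw [h2] at h1
    exact lt_of_lt_of_le one_pos h1
  -- assemble
  have hsum : ∑ j, lam j * (α * (cp + (-1:ℝ)^((j:ℕ)) * cm) / (((j:ℕ):ℝ) + 2 - α))
      = cp * (∑ j, lam j * (1:ℝ)^((j:ℕ)+2) * (α / (((j:ℕ):ℝ) + 2 - α)))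
        + cm * (∑ j, lam j * (-1:ℝ)^((j:ℕ)+2) * (α / (((j:ℕ):ℝ) + 2 - α))) := by
    rw [Finset.mul_sum, Finset.mul_sum, ← Finset.sum_add_distrib]
    refine Finset.sum_congr rfl fun j _ => ?_
    have hm1 : (-1:ℝ)^((j:ℕ)+2) = (-1:ℝ)^((j:ℕ)) := by
      rw [pow_add]
      norm_num
    rw [hm1, one_pow]
    ring
  rw [hsum, ← hsidep.2, ← hsidem.2]
  rcases lt_or_ge 0 cp with hcp' | hcp'
  · have h1 := hposside 1 (Or.inl rfl)
    have h2 : 0 ≤ cm * ∫ x in Ioc (0:ℝ) 1, fm x := mul_nonneg hcm hImnn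
    nlinarith
  · have hcp0 : cp = 0 := le_antisymm hcp' hcp
    have hcm' : 0 < cm := by linarith
    have h1 := hposside (-1) (Or.inr rfl)
    nlinarith



lemma moment_decomp (ν : Measure ℝ) (hν0 : ν {0} = 0) (k : ℕ)
    (hint : Integrable (fun y : ℝ => y ^ k) ν) (ε : ℝ) :
    ∫ y in {y : ℝ | |y| ≤ ε}, y ^ k ∂ν
      = (∫ y in Ioc 0 ε, y ^ k ∂ν)
        + (-1:ℝ)^k * ∫ y in Ioc 0 ε, y ^ k ∂(ν.map Neg.neg) := by
  have hmapint : ∫ y in Ioc (0:ℝ) ε, y ^ k ∂(ν.map Neg.neg)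
      = (-1:ℝ)^k * ∫ y in Ico (-ε) 0, y ^ k ∂ν := by
    rw [← integral_indicator measurableSet_Ioc]
    rw [MeasureTheory.integral_map measurable_neg.aemeasurable
      (((continuous_pow k).stronglyMeasurable.indicator measurableSet_Ioc).aestronglyMeasurable)]
    have hpt : ∀ y : ℝ, (Ioc (0:ℝ) ε).indicator (fun z => z ^ k) (-y)
        = (-1:ℝ)^k * (Ico (-ε) (0:ℝ)).indicator (fun z => z ^ k) y := by
      intro y
      by_cases hy : y ∈ Ico (-ε) (0:ℝ)
      · have hmem : -y ∈ Ioc (0:ℝ) ε := ⟨by linarith [hy.2], by linarith [hy.1]⟩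
        rw [indicator_of_mem hmem, indicator_of_mem hy]
        rw [neg_pow]
      · have hmem : -y ∉ Ioc (0:ℝ) ε := by
          intro hc
          exact hy ⟨by linarith [hc.2], by linarith [hc.1]⟩
        rw [indicator_of_notMem hmem, indicator_of_notMem hy, mul_zero]
    simp_rw [hpt]
    rw [MeasureTheory.integral_const_mul, integral_indicator measurableSet_Ico]
  rw [hmapint, ← mul_assoc, ← mul_pow]
  rw [show (-1:ℝ) * -1 = 1 by ring, one_pow, one_mul]
  have hae : {y : ℝ | |y| ≤ ε} =ᵐ[ν] (Ico (-ε) 0 ∪ Ioc 0 ε : Set ℝ) := by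
    have h0 : ∀ᵐ y ∂ν, y ≠ 0 := by
      rw [ae_iff]
      simpa using hν0
    rw [Filter.eventuallyEq_set]
    filter_upwards [h0] with y hy
    simp only [mem_setOf_eq, mem_union, mem_Ico, mem_Ioc, abs_le]
    constructor
    · rintro ⟨h1, h2⟩
      rcases lt_or_gt_of_ne hy with h | h
      · exact Or.inl ⟨h1, h⟩
      · exact Or.inr ⟨h, h2⟩
    · rintro (⟨h1, h2⟩ | ⟨h1, h2⟩)
      · exact ⟨h1, by linarith⟩
      · exact ⟨by linarith, h2⟩
  rw [setIntegral_congr_set hae]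
  rw [setIntegral_union ?hdisj measurableSet_Ioc hint.integrableOn hint.integrableOn]
  · ring
  case hdisj =>
    rw [Set.disjoint_left]
    rintro y ⟨_, hy2⟩ ⟨hy3, _⟩
    exact absurd (lt_trans hy2 hy3) (lt_irrefl y)

end Stmt17Aux
open Stmt17Aux

/-- `Λ̄_ε`: the minimal total mass of a finite positive measure matching the moments
`m_k^ε = ∫_{|y|≤ε} y^k ν(dy)`, `k = 2,…,n`. -/
noncomputable def minIntensity (n : ℕ) (ν : Measure ℝ) (ε : ℝ) : ℝ≥0∞ :=
  sInf {m : ℝ≥0∞ | ∃ νb : Measure ℝ, IsFiniteMeasure νb ∧ νb Set.univ = m ∧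
    ∀ k, 2 ≤ k → k ≤ n →
      MeasureTheory.Integrable (fun y : ℝ => y ^ k) νb ∧
        (∫ y, y ^ k ∂νb) = ∫ y in {y : ℝ | |y| ≤ ε}, y ^ k ∂ν}

/-- For `n = 2q` even and a Lévy measure `ν` satisfying assumption `(R_α)`,
the minimal intensity `Λ̄_ε` of the moment-matching problem for the small jumps satisfies
`Λ̄_ε ≤ C ν({|y| > ε})` for all sufficiently small `ε > 0`. -/
theorem stmt_17 (q : ℕ) (hq : 1 ≤ q) (n : ℕ) (hn : n = 2 * q) (ν : Measure ℝ)
    (hν0 : ν {0} = 0) (hνloc : (∫⁻ y, ENNReal.ofReal (min 1 (y ^ 2)) ∂ν) < ⊤)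
    (hmom : ∀ k, 2 ≤ k → k ≤ n → (∫⁻ y, ENNReal.ofReal (|y| ^ k) ∂ν) < ⊤)
    (α : ℝ) (hα0 : 0 < α) (hα2 : α < 2)
    (cp cm : ℝ) (hcp : 0 ≤ cp) (hcm : 0 ≤ cm) (hcpm : 0 < cp + cm)
    (g : ℝ → ℝ) (hgpos : ∀ x, 0 < x → 0 < g x)
    (hgRV : ∀ c : ℝ, 0 < c → Filter.Tendsto (fun x => g (c * x) / g x)
      (nhdsWithin 0 (Set.Ioi 0)) (nhds (c ^ (-α))))
    (htailp : Filter.Tendsto (fun x => (ν (Set.Ioi x)).toReal / g x)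
      (nhdsWithin 0 (Set.Ioi 0)) (nhds cp))
    (htailm : Filter.Tendsto (fun x => (ν (Set.Iio (-x))).toReal / g x)
      (nhdsWithin 0 (Set.Ioi 0)) (nhds cm)) :
    ∃ C : ℝ, ∃ ε₀ : ℝ, 0 < ε₀ ∧ ∀ ε, 0 < ε → ε < ε₀ →
      minIntensity n ν ε ≤ ENNReal.ofReal C * ν {y : ℝ | ε < |y|} := by
  classical
  have hn2 : 2 ≤ n := by omega
  set d : ℕ := n - 1 with hd
  have hd1 : 1 ≤ d := by omega
  -- global integrability
  have hIntGlob : ∀ k, 2 ≤ k → k ≤ n → Integrable (fun y : ℝ => y ^ k) ν := by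
    intro k h2 hn'
    refine ⟨(continuous_pow k).aestronglyMeasurable, ?_⟩
    rw [hasFiniteIntegral_iff_norm]
    have hh : ∀ y : ℝ, ENNReal.ofReal ‖y ^ k‖ = ENNReal.ofReal (|y| ^ k) := by
      intro y; rw [Real.norm_eq_abs, abs_pow]
    simp_rw [hh]
    exact hmom k h2 hn'
  have hIntMap : ∀ k, 2 ≤ k → k ≤ n → Integrable (fun y : ℝ => y ^ k) (ν.map Neg.neg) := by
    intro k h2 hn'
    rw [integrable_map_measure (continuous_pow k).aestronglyMeasurable
      measurable_neg.aemeasurable]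
    have heq : ((fun y : ℝ => y ^ k) ∘ Neg.neg) = fun y : ℝ => (-1:ℝ)^k * y ^ k := by
      funext y
      simp only [Function.comp_apply]
      rw [neg_pow]
    rw [heq]
    exact (hIntGlob k h2 hn').const_mul _
  have hmapIoi : ∀ x : ℝ, (ν.map Neg.neg) (Ioi x) = ν (Iio (-x)) := by
    intro x
    rw [Measure.map_apply measurable_neg measurableSet_Ioi]
    congr 1
    ext y
    simp only [mem_preimage, mem_Ioi, mem_Iio]
    constructor
    · intro h; linarith
    · intro h; linarith
  have hfinp : ∀ x : ℝ, 0 < x → ν (Ioi x) ≠ ⊤ := by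
    intro x hx
    refine tail_ne_top' ν hνloc measurableSet_Ioi hx (fun y hy => ?_)
    have h1 : x < y := hy
    exact le_trans h1.le (le_abs_self y)
  have hfinm : ∀ x : ℝ, 0 < x → (ν.map Neg.neg) (Ioi x) ≠ ⊤ := by
    intro x hx
    rw [hmapIoi]
    refine tail_ne_top' ν hνloc measurableSet_Iio hx (fun y hy => ?_)
    have h1 : y < -x := hy
    exact le_trans (by linarith : x ≤ -y) (neg_le_abs y)
  have htailm' : Tendsto (fun x => ((ν.map Neg.neg) (Ioi x)).toReal / g x)
      (nhdsWithin 0 (Ioi 0)) (nhds cm) := by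
    have hfe : (fun x => ((ν.map Neg.neg) (Ioi x)).toReal / g x)
        = fun x => (ν (Iio (-x))).toReal / g x := funext fun x => by rw [hmapIoi]
    rw [hfe]; exact htailm
  -- Karamata limits per coordinate
  set Γ : Fin d → ℝ := fun j => α * (cp + (-1:ℝ)^((j:ℕ)) * cm) / (((j:ℕ):ℝ) + 2 - α) with hΓ
  set svec : ℝ → Fin d → ℝ := fun ε j =>
    (∫ y in {y : ℝ | |y| ≤ ε}, y ^ ((j:ℕ)+2) ∂ν) / (ε^((j:ℕ)+2) * g ε) with hsvec
  have hKar : ∀ j : Fin d, Tendsto (fun ε => svec ε j) (nhdsWithin 0 (Ioi 0)) (nhds (Γ j)) := by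
    intro j
    have hj2 : 2 ≤ (j:ℕ)+2 := by omega
    have hjn : (j:ℕ)+2 ≤ n := by have := j.isLt; omega
    have hkp := karamata_side ν ((j:ℕ)+2) hj2 α hα0 hα2 cp hcp g hgpos hgRV htailp hfinp
    have hkm := karamata_side (ν.map Neg.neg) ((j:ℕ)+2) hj2 α hα0 hα2 cm hcm g hgpos hgRV
      htailm' hfinm
    have hcomb := hkp.add (hkm.const_mul ((-1:ℝ)^((j:ℕ)+2)))
    have heqf : ∀ ε : ℝ,
        (∫ y in Ioc 0 ε, y ^ ((j:ℕ)+2) ∂ν) / (ε^((j:ℕ)+2) * g ε)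
          + (-1:ℝ)^((j:ℕ)+2) * ((∫ y in Ioc 0 ε, y ^ ((j:ℕ)+2) ∂(ν.map Neg.neg))
              / (ε^((j:ℕ)+2) * g ε))
        = svec ε j := by
      intro ε
      simp only [hsvec]
      rw [moment_decomp ν hν0 _ (hIntGlob _ hj2 hjn) ε]
      ring
    have hval : cp * α / ((((j:ℕ)+2 : ℕ):ℝ) - α)
        + (-1:ℝ)^((j:ℕ)+2) * (cm * α / ((((j:ℕ)+2 : ℕ):ℝ) - α)) = Γ j := by
      simp only [hΓ]
      have hm1 : (-1:ℝ)^((j:ℕ)+2) = (-1:ℝ)^((j:ℕ)) := by rw [pow_add]; norm_num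
      rw [hm1]
      have hcst : ((((j:ℕ)+2 : ℕ)):ℝ) = ((j:ℕ):ℝ) + 2 := by push_cast; ring
      rw [hcst]
      have hne : ((j:ℕ):ℝ) + 2 - α ≠ 0 := by
        have : (0:ℝ) ≤ ((j:ℕ):ℝ) := Nat.cast_nonneg _
        linarith
      field_simp
    rw [← hval]
    exact Tendsto.congr heqf hcomb
  -- cone representation
  obtain ⟨η₀, hη₀pos, hmem⟩ := cone_main d Γ (gamma_pos d α cp cm hα0 hα2 hcp hcm hcpm)
  obtain ⟨M, w, uu, hw, huu, hrep⟩ := hmem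
  -- constants
  set K' : ℝ := (∑ j : Fin d, ∑ i : Fin d, |(Amat d)⁻¹ j i|) + 1 with hK'
  have hKsum_nn : 0 ≤ ∑ j : Fin d, ∑ i : Fin d, |(Amat d)⁻¹ j i| :=
    Finset.sum_nonneg fun j _ => Finset.sum_nonneg fun i _ => abs_nonneg _
  have hK'pos : 0 < K' := by simp only [hK']; linarith
  set W₀ : ℝ := (∑ i, w i) + (d:ℝ) * (2 * η₀) with hW₀def
  have hWsum_nn : 0 ≤ ∑ i, w i := Finset.sum_nonneg fun i _ => hw i
  have hdr : (0:ℝ) ≤ (d:ℝ) := Nat.cast_nonneg d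
  have hW₀nn : 0 ≤ W₀ := by simp only [hW₀def]; nlinarith
  set CC : ℝ := 2 * W₀ / (cp + cm) with hCC
  have hCCnn : 0 ≤ CC := by positivity
  -- tail tendsto
  have hTailTendsto : Tendsto (fun ε => (ν {y : ℝ | ε < |y|}).toReal / g ε)
      (nhdsWithin 0 (Ioi 0)) (nhds (cp + cm)) := by
    have h := htailp.add htailm
    refine Tendsto.congr' ?_ h
    filter_upwards [self_mem_nhdsWithin] with ε hε
    have hε0 : (0:ℝ) < ε := hε
    have hset : {y : ℝ | ε < |y|} = Ioi ε ∪ Iio (-ε) := by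
      ext y
      simp only [mem_setOf_eq, mem_union, mem_Iio, mem_Ioi]
      rw [lt_abs]
      constructor
      · rintro (h | h)
        · exact Or.inl h
        · exact Or.inr (by linarith)
      · rintro (h | h)
        · exact Or.inl h
        · exact Or.inr (by linarith)
    have hdisj : Disjoint (Ioi ε) (Iio (-ε)) := by
      rw [Set.disjoint_left]
      rintro y hy1 hy2
      have : ε < y := hy1
      have : y < -ε := hy2
      linarith
    rw [hset, measure_union hdisj measurableSet_Iio,
      ENNReal.toReal_add (hfinp ε hε0) (by rw [← hmapIoi]; exact hfinm ε hε0)]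
    ring
  have hTailLB : ∀ᶠ ε in nhdsWithin (0:ℝ) (Ioi 0),
      (cp + cm)/2 * g ε ≤ (ν {y : ℝ | ε < |y|}).toReal := by
    have h := hTailTendsto.eventually_const_le (show (cp+cm)/2 < cp+cm by linarith)
    filter_upwards [h, self_mem_nhdsWithin] with ε h1 h2
    have hgε := hgpos ε h2
    calc (cp+cm)/2 * g ε ≤ ((ν {y : ℝ | ε < |y|}).toReal / g ε) * g ε :=
      mul_le_mul_of_nonneg_right h1 hgε.le
    _ = (ν {y : ℝ | ε < |y|}).toReal := by field_simp
  have hsmall : ∀ᶠ ε in nhdsWithin (0:ℝ) (Ioi 0), ∀ j : Fin d, |svec ε j - Γ j| ≤ η₀ / K' := by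
    rw [eventually_all]
    intro j
    have h2 := Metric.tendsto_nhds.mp (hKar j) (η₀/K') (by positivity)
    filter_upwards [h2] with ε hε
    rw [Real.dist_eq] at hε
    exact hε.le
  obtain ⟨ε₀, hε₀pos, hε₀⟩ : ∃ ε₀, 0 < ε₀ ∧ ∀ ε, 0 < ε → ε < ε₀ →
      ((∀ j : Fin d, |svec ε j - Γ j| ≤ η₀ / K') ∧
        (cp + cm)/2 * g ε ≤ (ν {y : ℝ | ε < |y|}).toReal) := by
    obtain ⟨u, hu, hsub⟩ := mem_nhdsGT_iff_exists_Ioc_subset.mp (hsmall.and hTailLB)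
    exact ⟨u, hu, fun ε h1 h2 => hsub ⟨h1, h2.le⟩⟩
  refine ⟨CC, ε₀, hε₀pos, ?_⟩
  intro ε hε0 hεε₀
  obtain ⟨hsm, htb⟩ := hε₀ ε hε0 hεε₀
  have hgε := hgpos ε hε0
  -- corrected weights
  set β : Fin d → ℝ := (Amat d)⁻¹.mulVec (fun j => svec ε j - Γ j) with hβdef
  have hβbound : ∀ j, |β j| ≤ η₀ := by
    intro j
    have h1 : |β j| ≤ ∑ i, |(Amat d)⁻¹ j i| * (η₀ / K') := by
      simp only [hβdef, Matrix.mulVec, dotProduct]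
      refine le_trans (Finset.abs_sum_le_sum_abs _ _) ?_
      refine Finset.sum_le_sum fun i _ => ?_
      rw [abs_mul]
      exact mul_le_mul_of_nonneg_left (hsm i) (abs_nonneg _)
    have h2 : ∑ i, |(Amat d)⁻¹ j i| * (η₀ / K') = (∑ i, |(Amat d)⁻¹ j i|) * (η₀/K') :=
      (Finset.sum_mul _ _ _).symm
    have h3 : (∑ i, |(Amat d)⁻¹ j i|) ≤ K' := by
      have := Finset.single_le_sum
        (f := fun j' => ∑ i, |(Amat d)⁻¹ j' i|)
        (fun j' _ => Finset.sum_nonneg fun i _ => abs_nonneg _) (Finset.mem_univ j)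
      simp only [hK']
      linarith
    have h4 : (∑ i, |(Amat d)⁻¹ j i|) * (η₀/K') ≤ K' * (η₀/K') :=
      mul_le_mul_of_nonneg_right h3 (by positivity)
    have h5 : K' * (η₀/K') = η₀ := by field_simp
    linarith [h1.trans (h2.le.trans (h4.trans h5.le))]
  have hwnn : ∀ j : Fin d, 0 ≤ η₀ + β j := by
    intro j
    have := (abs_le.mp (hβbound j)).1
    linarith
  -- the matching measure
  set νb : Measure ℝ :=
    (∑ i : Fin M, ENNReal.ofReal (g ε * w i) • Measure.dirac (ε * uu i))
    + (∑ j : Fin d, ENNReal.ofReal (g ε * (η₀ + β j)) • Measure.dirac (ε * zz d j)) with hνb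
  have hdint : ∀ (k : ℕ) (a : ℝ) (c : ℝ≥0∞), c ≠ ⊤ →
      Integrable (fun y : ℝ => y^k) (c • Measure.dirac a) := by
    intro k a c hc
    refine Integrable.smul_measure ?_ hc
    refine ⟨(continuous_pow k).aestronglyMeasurable, ?_⟩
    rw [hasFiniteIntegral_iff_norm]
    rw [lintegral_dirac' _ ((continuous_pow k).measurable.norm.ennreal_ofReal)]
    exact ENNReal.ofReal_lt_top
  have hIntb : ∀ k : ℕ, Integrable (fun y : ℝ => y ^ k) νb := by
    intro k
    rw [hνb]
    refine Integrable.add_measure ?_ ?_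
    · rw [integrable_finset_sum_measure]
      exact fun i _ => hdint k _ _ ENNReal.ofReal_ne_top
    · rw [integrable_finset_sum_measure]
      exact fun j _ => hdint k _ _ ENNReal.ofReal_ne_top
  have hwnn2 : ∀ i, 0 ≤ g ε * w i := fun i => mul_nonneg hgε.le (hw i)
  have hwnn3 : ∀ j, 0 ≤ g ε * (η₀ + β j) := fun j => mul_nonneg hgε.le (hwnn j)
  have hIntegralb : ∀ k : ℕ, ∫ y, y ^ k ∂νb
      = (∑ i : Fin M, (g ε * w i) * (ε * uu i)^k)
        + ∑ j : Fin d, (g ε * (η₀ + β j)) * (ε * zz d j)^k := by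
    intro k
    rw [hνb, integral_add_measure
      ((integrable_finset_sum_measure).mpr fun i _ => hdint k _ _ ENNReal.ofReal_ne_top)
      ((integrable_finset_sum_measure).mpr fun j _ => hdint k _ _ ENNReal.ofReal_ne_top)]
    congr 1
    · rw [integral_finset_sum_measure fun i _ => hdint k _ _ ENNReal.ofReal_ne_top]
      refine Finset.sum_congr rfl fun i _ => ?_
      rw [integral_smul_measure, integral_dirac, ENNReal.toReal_ofReal (hwnn2 i), smul_eq_mul]
    · rw [integral_finset_sum_measure fun j _ => hdint k _ _ ENNReal.ofReal_ne_top]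
      refine Finset.sum_congr rfl fun j _ => ?_
      rw [integral_smul_measure, integral_dirac, ENNReal.toReal_ofReal (hwnn3 j), smul_eq_mul]
  -- mass of νb
  have hmass : νb univ = ENNReal.ofReal (g ε * ((∑ i, w i) + ∑ j, (η₀ + β j))) := by
    rw [hνb]
    rw [Measure.add_apply, Measure.finset_sum_apply, Measure.finset_sum_apply]
    simp only [Measure.smul_apply, measure_univ, smul_eq_mul, mul_one]
    rw [← ENNReal.ofReal_sum_of_nonneg (fun i _ => hwnn2 i),
      ← ENNReal.ofReal_sum_of_nonneg (fun j _ => hwnn3 j),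
      ← ENNReal.ofReal_add (Finset.sum_nonneg fun i _ => hwnn2 i)
        (Finset.sum_nonneg fun j _ => hwnn3 j)]
    congr 1
    rw [mul_add, Finset.mul_sum, Finset.mul_sum]
  -- νb is a finite measure
  have hfinνb : IsFiniteMeasure νb := by
    constructor
    rw [hmass]
    exact ENNReal.ofReal_lt_top
  -- moments of νb
  have hmoments : ∀ k, 2 ≤ k → k ≤ n →
      (∫ y, y ^ k ∂νb) = ∫ y in {y : ℝ | |y| ≤ ε}, y ^ k ∂ν := by
    intro k h2 hn'
    set j₀ : Fin d := ⟨k - 2, by omega⟩ with hj₀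
    have hk' : (j₀:ℕ) + 2 = k := by simp only [hj₀]; omega
    have hΓrep : ∑ i : Fin M, w i * (uu i)^((j₀:ℕ)+2)
        = Γ j₀ - η₀ * ∑ i : Fin d, (zz d i)^((j₀:ℕ)+2) := by
      have h1 := congrFun hrep j₀
      simp only [Pi.sub_apply, Pi.smul_apply, smul_eq_mul, Finset.sum_apply, vv] at h1
      linarith [h1]
    have hβrep : ∑ j : Fin d, (η₀ + β j) * (zz d j)^((j₀:ℕ)+2)
        = η₀ * ∑ i : Fin d, (zz d i)^((j₀:ℕ)+2) + (svec ε j₀ - Γ j₀) := by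
      have hAβ : (Amat d).mulVec β = fun j => svec ε j - Γ j := by
        rw [hβdef]
        exact Amat_mulVec_inv d _
      have hAβj := congrFun hAβ j₀
      rw [Matrix.mulVec, dotProduct] at hAβj
      simp only [Amat, Matrix.of_apply] at hAβj
      calc ∑ j : Fin d, (η₀ + β j) * (zz d j)^((j₀:ℕ)+2)
          = ∑ j : Fin d, (η₀ * (zz d j)^((j₀:ℕ)+2) + (zz d j)^((j₀:ℕ)+2) * β j) := by
            refine Finset.sum_congr rfl fun j _ => by ring
      _ = η₀ * ∑ j : Fin d, (zz d j)^((j₀:ℕ)+2) + ∑ j : Fin d, (zz d j)^((j₀:ℕ)+2) * β j := by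
            rw [Finset.sum_add_distrib, Finset.mul_sum]
      _ = η₀ * ∑ i : Fin d, (zz d i)^((j₀:ℕ)+2) + (svec ε j₀ - Γ j₀) := by
            rw [hAβj]
    rw [hIntegralb k]
    have hexp : ∀ x : ℝ, (ε * x)^k = ε^k * x^k := fun x => mul_pow ε x k
    have hcollect : (∑ i : Fin M, (g ε * w i) * (ε * uu i)^k)
        + ∑ j : Fin d, (g ε * (η₀ + β j)) * (ε * zz d j)^k
        = ε^k * g ε * ((∑ i : Fin M, w i * (uu i)^k) + ∑ j : Fin d, (η₀ + β j) * (zz d j)^k) := by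
      rw [mul_add, Finset.mul_sum, Finset.mul_sum]
      congr 1
      · exact Finset.sum_congr rfl fun i _ => by rw [hexp]; ring
      · exact Finset.sum_congr rfl fun j _ => by rw [hexp]; ring
    rw [hcollect]
    rw [hk'] at hΓrep hβrep
    have hsum_eq : (∑ i : Fin M, w i * (uu i)^k) + ∑ j : Fin d, (η₀ + β j) * (zz d j)^k
        = svec ε j₀ := by rw [hΓrep, hβrep]; ring
    rw [hsum_eq]
    have hsval : svec ε j₀ = (∫ y in {y : ℝ | |y| ≤ ε}, y ^ k ∂ν) / (ε^k * g ε) := by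
      simp only [hsvec, hk']
    rw [hsval]
    have hεk : (ε:ℝ)^k ≠ 0 := pow_ne_zero _ hε0.ne'
    field_simp
  -- conclude via sInf
  have hmemS : νb univ ∈ {m : ℝ≥0∞ | ∃ νb' : Measure ℝ, IsFiniteMeasure νb' ∧
      νb' Set.univ = m ∧ ∀ k, 2 ≤ k → k ≤ n → Integrable (fun y : ℝ => y ^ k) νb' ∧
        (∫ y, y ^ k ∂νb') = ∫ y in {y : ℝ | |y| ≤ ε}, y ^ k ∂ν} :=
    ⟨νb, hfinνb, rfl, fun k h2 hn' => ⟨hIntb k, hmoments k h2 hn'⟩⟩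
  have h1 : minIntensity n ν ε ≤ νb univ := sInf_le hmemS
  refine le_trans h1 ?_
  rw [hmass]
  have hT : (∑ i, w i) + ∑ j, (η₀ + β j) ≤ W₀ := by
    have hsb : ∑ j : Fin d, (η₀ + β j) ≤ ∑ j : Fin d, 2 * η₀ := by
      refine Finset.sum_le_sum fun j _ => ?_
      have := (abs_le.mp (hβbound j)).2
      linarith
    rw [Finset.sum_const, Finset.card_univ, Fintype.card_fin, nsmul_eq_mul] at hsb
    simp only [hW₀def]
    linarith
  have hTnn : 0 ≤ (∑ i, w i) + ∑ j, (η₀ + β j) :=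
    add_nonneg hWsum_nn (Finset.sum_nonneg fun j _ => hwnn j)
  have hg_le : g ε ≤ 2 / (cp + cm) * (ν {y : ℝ | ε < |y|}).toReal := by
    rw [div_mul_eq_mul_div, le_div_iff₀ (by linarith : (0:ℝ) < cp + cm)]
    nlinarith [htb]
  have hbound_real : g ε * ((∑ i, w i) + ∑ j, (η₀ + β j))
      ≤ CC * (ν {y : ℝ | ε < |y|}).toReal := by
    calc g ε * ((∑ i, w i) + ∑ j, (η₀ + β j)) ≤ g ε * W₀ :=
      mul_le_mul_of_nonneg_left hT hgε.le
    _ ≤ (2 / (cp + cm) * (ν {y : ℝ | ε < |y|}).toReal) * W₀ :=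
      mul_le_mul_of_nonneg_right hg_le hW₀nn
    _ = CC * (ν {y : ℝ | ε < |y|}).toReal := by rw [hCC]; ring
  have hfinTail : ν {y : ℝ | ε < |y|} ≠ ⊤ := by
    refine tail_ne_top' ν hνloc ?_ hε0 (fun y hy => le_of_lt hy)
    exact measurableSet_lt measurable_const continuous_abs.measurable
  calc ENNReal.ofReal (g ε * ((∑ i, w i) + ∑ j, (η₀ + β j)))
      ≤ ENNReal.ofReal (CC * (ν {y : ℝ | ε < |y|}).toReal) :=
    ENNReal.ofReal_le_ofReal hbound_real
  _ = ENNReal.ofReal CC * ENNReal.ofReal ((ν {y : ℝ | ε < |y|}).toReal) :=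
    ENNReal.ofReal_mul hCCnn
  _ = ENNReal.ofReal CC * ν {y : ℝ | ε < |y|} := by rw [ENNReal.ofReal_toReal hfinTail]
end
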